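/- arXiv:2408.11911 — 6 statements merged into one kernel-verified Lean document; each statement's English description precedes it below -/
import Mathlib

section
/- Let (S_G, M_G) be a quantum graph on M_n(ℂ) and (S_H, M_H) a quantum graph on M_m(ℂ). Set M_K = M_G ⊗ M_H (the unital star-subalgebra of M_{nm}(ℂ) spanned by Kronecker products of elements of M_G and M_H) and S_K = S_G ⊗ M_H' + M_G' ⊗ S_H (Cartesian product). Then (S_K, M_K) is a quantum graph on M_{nm}(ℂ): S_K is a ℂ-linear subspace closed under conjugate transpose, A X B ∈ S_K for all A, B in the commutant M_K' of M_K in M_{nm}(ℂ) and all X ∈ S_K, and Tr(X Aᴴ) = 0 for all X ∈ S_K and A ∈ M_K'. -/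
open Matrix Kronecker BigOperators

noncomputable section

/-- The commutant of a set of matrices in `M_I(ℂ)`. -/
def commutant {I : Type*} [Fintype I] (M : Set (Matrix I I ℂ)) : Set (Matrix I I ℂ) :=
  {Y | ∀ A ∈ M, Y * A = A * Y}

/-- The ℂ-linear span of Kronecker products `v ⊗ₖ w` with `v ∈ V`, `w ∈ W`. -/
def tensorSpan {I J : Type*} [Fintype I] [Fintype J]
    (V : Set (Matrix I I ℂ)) (W : Set (Matrix J J ℂ)) :
    Submodule ℂ (Matrix (I × J) (I × J) ℂ) :=
  Submodule.span ℂ {x | ∃ v ∈ V, ∃ w ∈ W, x = v ⊗ₖ w}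

/-- A pair `(S, M)` is a quantum graph: `S` is closed under conjugate transpose, is a
bimodule over the commutant of `M`, and is trace-orthogonal to the commutant of `M`. -/
def IsQuantumGraph {I : Type*} [Fintype I]
    (S : Submodule ℂ (Matrix I I ℂ)) (M : Set (Matrix I I ℂ)) : Prop :=
  (∀ X ∈ S, Xᴴ ∈ S) ∧
  (∀ A ∈ commutant M, ∀ B ∈ commutant M, ∀ X ∈ S, A * X * B ∈ S) ∧
  (∀ X ∈ S, ∀ A ∈ commutant M, Matrix.trace (X * Aᴴ) = 0)

/-- Product of the matrices `P a`, `a ∈ T`, taken in increasing order of indices. -/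
def finsetProd {β : Type*} [Monoid β] {c : ℕ} (P : Fin c → β) (T : Finset (Fin c)) : β :=
  ((T.sort (· ≤ ·)).map P).prod

/-- A quantum `c`-coloring of `(S, M)` (with auxiliary algebra `M_k(ℂ)`). -/
def IsQColoring {I : Type*} [Fintype I] [DecidableEq I] {c k : ℕ}
    (S : Submodule ℂ (Matrix I I ℂ)) (M : Set (Matrix I I ℂ))
    (P : Fin c → Matrix (I × Fin k) (I × Fin k) ℂ) : Prop :=
  (∀ a, P a ∈ tensorSpan M (Set.univ : Set (Matrix (Fin k) (Fin k) ℂ))) ∧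
  (∀ a, (P a)ᴴ = P a) ∧
  (∀ a, P a * P a = P a) ∧
  ((∑ a, P a) = 1) ∧
  (∀ X ∈ S, ∀ a, P a * (X ⊗ₖ (1 : Matrix (Fin k) (Fin k) ℂ)) * P a = 0)

def HasQColoring {I : Type*} [Fintype I] [DecidableEq I]
    (S : Submodule ℂ (Matrix I I ℂ)) (M : Set (Matrix I I ℂ)) (c : ℕ) : Prop :=
  ∃ k : ℕ, 1 ≤ k ∧ ∃ P : Fin c → Matrix (I × Fin k) (I × Fin k) ℂ, IsQColoring S M P

/-- The quantum chromatic number `χ_q(S, M) ∈ ℕ∞`. -/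
def qChrom {I : Type*} [Fintype I] [DecidableEq I]
    (S : Submodule ℂ (Matrix I I ℂ)) (M : Set (Matrix I I ℂ)) : ℕ∞ :=
  ⨅ (c : ℕ) (_ : HasQColoring S M c), (c : ℕ∞)

/-- A quantum `b`-fold coloring of `(S, M)` using `c` colors
(with auxiliary algebra `M_k(ℂ)`). -/
def IsQBFoldColoring {I : Type*} [Fintype I] [DecidableEq I] {c k : ℕ}
    (S : Submodule ℂ (Matrix I I ℂ)) (M : Set (Matrix I I ℂ)) (b : ℕ)
    (P : Fin c → Matrix (I × Fin k) (I × Fin k) ℂ) : Prop :=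
  (∀ a, P a ∈ tensorSpan M (Set.univ : Set (Matrix (Fin k) (Fin k) ℂ))) ∧
  (∀ a a', P a * P a' = P a' * P a) ∧
  (∀ a, (P a)ᴴ = P a) ∧
  (∀ a, P a * P a = P a) ∧
  ((∑ T ∈ Finset.univ.powersetCard b, finsetProd P T) = 1) ∧
  (∀ X ∈ S, ∀ a, P a * (X ⊗ₖ (1 : Matrix (Fin k) (Fin k) ℂ)) * P a = 0)

def HasQBFoldColoring {I : Type*} [Fintype I] [DecidableEq I]
    (S : Submodule ℂ (Matrix I I ℂ)) (M : Set (Matrix I I ℂ)) (b c : ℕ) : Prop :=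
  ∃ k : ℕ, 1 ≤ k ∧ ∃ P : Fin c → Matrix (I × Fin k) (I × Fin k) ℂ, IsQBFoldColoring S M b P

/-- The quantum `b`-fold chromatic number `χ_{b,q}(S, M) ∈ ℕ∞`. -/
def qbChrom {I : Type*} [Fintype I] [DecidableEq I]
    (S : Submodule ℂ (Matrix I I ℂ)) (M : Set (Matrix I I ℂ)) (b : ℕ) : ℕ∞ :=
  ⨅ (c : ℕ) (_ : HasQBFoldColoring S M b c), (c : ℕ∞)

/-- A local `b`-fold coloring of `(S, M)` using `c` colors (projections in `M` itself). -/
def IsLocalBFoldColoring {I : Type*} [Fintype I] [DecidableEq I] {c : ℕ}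
    (S : Submodule ℂ (Matrix I I ℂ)) (M : Set (Matrix I I ℂ)) (b : ℕ)
    (P : Fin c → Matrix I I ℂ) : Prop :=
  (∀ a, P a ∈ M) ∧
  (∀ a a', P a * P a' = P a' * P a) ∧
  (∀ a, (P a)ᴴ = P a) ∧
  (∀ a, P a * P a = P a) ∧
  ((∑ T ∈ Finset.univ.powersetCard b, finsetProd P T) = 1) ∧
  (∀ X ∈ S, ∀ a, P a * X * P a = 0)

def HasLocalBFoldColoring {I : Type*} [Fintype I] [DecidableEq I]
    (S : Submodule ℂ (Matrix I I ℂ)) (M : Set (Matrix I I ℂ)) (b c : ℕ) : Prop :=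
  ∃ P : Fin c → Matrix I I ℂ, IsLocalBFoldColoring S M b P

/-- The local `b`-fold chromatic number. -/
def localBChrom {I : Type*} [Fintype I] [DecidableEq I]
    (S : Submodule ℂ (Matrix I I ℂ)) (M : Set (Matrix I I ℂ)) (b : ℕ) : ℕ∞ :=
  ⨅ (c : ℕ) (_ : HasLocalBFoldColoring S M b c), (c : ℕ∞)

/-- `S_G`: span of matrix units on edges of a simple graph. -/
def graphSpan {V : Type*} [Fintype V] [DecidableEq V] (G : SimpleGraph V) :
    Submodule ℂ (Matrix V V ℂ) :=
  Submodule.span ℂ {x | ∃ v w, G.Adj v w ∧ x = Matrix.single v w 1}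

/-- The partial trace over the first tensor factor. -/
def ptrace {I J : Type*} [Fintype I] (P : Matrix (I × J) (I × J) ℂ) : Matrix J J ℂ :=
  Matrix.of fun p q => ∑ i, P (i, p) (i, q)

/-- The complete quantum graph operator space: everything trace-orthogonal to `M'`. -/
def completeS {I : Type*} [Fintype I] (M : Set (Matrix I I ℂ)) :
    Submodule ℂ (Matrix I I ℂ) where
  carrier := {X | ∀ A ∈ commutant M, Matrix.trace (X * Aᴴ) = 0}
  add_mem' := by
    intro x y hx hy A hA
    rw [Set.mem_setOf_eq] at *
    rw [Matrix.add_mul, Matrix.trace_add, hx A hA, hy A hA, add_zero]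
  zero_mem' := by
    intro A hA
    rw [Matrix.zero_mul, Matrix.trace_zero]
  smul_mem' := by
    intro r x hx A hA
    rw [Set.mem_setOf_eq] at *
    rw [Matrix.smul_mul, Matrix.trace_smul, hx A hA, smul_zero]


/-- The commutant, as a submodule. -/
def commSub {I : Type*} [Fintype I] (M : Set (Matrix I I ℂ)) : Submodule ℂ (Matrix I I ℂ) where
  carrier := commutant M
  add_mem' := fun hx hy A hA => by rw [add_mul, mul_add, hx A hA, hy A hA]
  zero_mem' := fun A hA => by rw [zero_mul, mul_zero]
  smul_mem' := fun c x hx A hA => by rw [smul_mul_assoc, mul_smul_comm, hx A hA]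

lemma commutant_mul_mem {I : Type*} [Fintype I] {M : Set (Matrix I I ℂ)} {Y Z : Matrix I I ℂ}
    (hY : Y ∈ commutant M) (hZ : Z ∈ commutant M) : Y * Z ∈ commutant M := fun A hA => by
  rw [mul_assoc, hZ A hA, ← mul_assoc, hY A hA, mul_assoc]

lemma kron_conjT {n m : ℕ} (A : Matrix (Fin n) (Fin n) ℂ) (B : Matrix (Fin m) (Fin m) ℂ) :
    (A ⊗ₖ B)ᴴ = Aᴴ ⊗ₖ Bᴴ := by
  ext ⟨i,p⟩ ⟨j,q⟩
  simp [conjTranspose_apply, mul_comm]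

lemma commutant_star {I : Type*} [Fintype I] {M : Set (Matrix I I ℂ)}
    (hM : ∀ A ∈ M, Aᴴ ∈ M) {Y : Matrix I I ℂ} (hY : Y ∈ commutant M) : Yᴴ ∈ commutant M := by
  intro A hA
  have h := congrArg conjTranspose (hY Aᴴ (hM A hA))
  simpa [Matrix.conjTranspose_mul] using h.symm

theorem mem_tensorSpan_commutant {n m : ℕ} {V : Set (Matrix (Fin n) (Fin n) ℂ)}
    {W : Set (Matrix (Fin m) (Fin m) ℂ)} (T : Matrix (Fin n × Fin m) (Fin n × Fin m) ℂ)
    (h1 : ∀ a ∈ V, (a ⊗ₖ (1 : Matrix (Fin m) (Fin m) ℂ)) * T = T * (a ⊗ₖ 1))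
    (h2 : ∀ b ∈ W, ((1 : Matrix (Fin n) (Fin n) ℂ) ⊗ₖ b) * T = T * (1 ⊗ₖ b)) :
    T ∈ tensorSpan (commutant V) (commutant W) := by
  classical
  set C : Submodule ℂ (Matrix (Fin m) (Fin m) ℂ) := commSub W with hC
  have hR : ∀ i j : Fin n, (Matrix.of fun p q => T (i,p) (j,q)) ∈ C := by
    intro i j b hb
    have he : ∀ p q : Fin m, (((1 : Matrix (Fin n) (Fin n) ℂ) ⊗ₖ b) * T) (i,p) (j,q)
        = (T * ((1 : Matrix (Fin n) (Fin n) ℂ) ⊗ₖ b)) (i,p) (j,q) := fun p q => by rw [h2 b hb]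
    ext p q
    have he' := he p q
    simp only [Matrix.mul_apply, Fintype.sum_prod_type, kroneckerMap_apply,
      Matrix.one_apply, ite_mul, mul_ite, one_mul, zero_mul, mul_one, mul_zero,
      Finset.sum_ite_irrel, Finset.sum_const_zero,
      Finset.sum_ite_eq, Finset.sum_ite_eq', Finset.mem_univ, if_true] at he' ⊢
    simpa [Matrix.mul_apply] using he'.symm
  let b := Module.Free.chooseBasis ℂ C
  let S : Module.Free.ChooseBasisIndex ℂ C → Matrix (Fin n) (Fin n) ℂ :=
    fun k => Matrix.of fun i j => b.repr ⟨Matrix.of fun p q => T (i,p) (j,q), hR i j⟩ k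
  have hTsum : T = ∑ k, S k ⊗ₖ ((b k : C) : Matrix (Fin m) (Fin m) ℂ) := by
    ext ⟨i,p⟩ ⟨j,q⟩
    have h0 := b.sum_repr ⟨Matrix.of fun p q => T (i,p) (j,q), hR i j⟩
    have h1 := congrArg (fun x : C => (x : Matrix (Fin m) (Fin m) ℂ) p q) h0
    simp only [Submodule.coe_sum, SetLike.val_smul, Matrix.sum_apply, Matrix.smul_apply,
      smul_eq_mul, Matrix.of_apply] at h1
    simp only [Matrix.sum_apply, kroneckerMap_apply, S, Matrix.of_apply]
    exact h1.symm
  have hS : ∀ k, S k ∈ commutant V := by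
    intro k0 a ha
    have h := h1 a ha
    rw [hTsum, Finset.mul_sum, Finset.sum_mul] at h
    simp only [← Matrix.mul_kronecker_mul, one_mul, mul_one] at h
    have hcoef : ∀ i j : Fin n, ∀ k, (a * S k) i j = (S k * a) i j := by
      intro i j
      have hz : (∑ k, (((a * S k) i j) - ((S k * a) i j)) • b k) = (0 : C) := by
        apply Subtype.coe_injective
        ext p q
        have he := congrFun (congrFun h (i,p)) (j,q)
        simp only [Matrix.sum_apply, kroneckerMap_apply] at he
        simp only [Submodule.coe_sum, SetLike.val_smul, Matrix.sum_apply, Matrix.smul_apply,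
          smul_eq_mul, sub_mul, Finset.sum_sub_distrib, ZeroMemClass.coe_zero,
          Matrix.zero_apply, sub_eq_zero]
        exact he
      intro k
      have := Fintype.linearIndependent_iff.mp b.linearIndependent _ hz k
      exact sub_eq_zero.mp this
    ext i j
    exact (hcoef i j k0).symm
  rw [hTsum]
  exact Submodule.sum_mem _ fun k _ =>
    Submodule.subset_span ⟨S k, hS k, _, (b k).2, rfl⟩

lemma mul_kron_mul_mem {n m : ℕ} {P : Set (Matrix (Fin n) (Fin n) ℂ)}
    {Q : Set (Matrix (Fin m) (Fin m) ℂ)}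
    {S : Set (Matrix (Fin n) (Fin n) ℂ)} {R : Set (Matrix (Fin m) (Fin m) ℂ)}
    (hS : ∀ a ∈ P, ∀ b ∈ P, ∀ x ∈ S, a * x * b ∈ S)
    (hR : ∀ a ∈ Q, ∀ b ∈ Q, ∀ x ∈ R, a * x * b ∈ R)
    {A B : Matrix (Fin n × Fin m) (Fin n × Fin m) ℂ}
    (hA : A ∈ tensorSpan P Q) (hB : B ∈ tensorSpan P Q)
    {v : Matrix (Fin n) (Fin n) ℂ} {w : Matrix (Fin m) (Fin m) ℂ}
    (hv : v ∈ S) (hw : w ∈ R) :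
    A * (v ⊗ₖ w) * B ∈ tensorSpan S R := by
  refine Submodule.span_induction ?_ ?_ ?_ ?_ hA
  · rintro x ⟨a1, ha1, b1, hb1, rfl⟩
    refine Submodule.span_induction ?_ ?_ ?_ ?_ hB
    · rintro y ⟨a2, ha2, b2, hb2, rfl⟩
      have he : (a1 ⊗ₖ b1) * (v ⊗ₖ w) * (a2 ⊗ₖ b2) = (a1 * v * a2) ⊗ₖ (b1 * w * b2) := by
        rw [Matrix.mul_kronecker_mul, Matrix.mul_kronecker_mul]
      rw [he]
      exact Submodule.subset_span ⟨_, hS a1 ha1 a2 ha2 v hv, _, hR b1 hb1 b2 hb2 w hw, rfl⟩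
    · rw [mul_zero]; exact zero_mem _
    · intro y z _ _ hy hz; rw [mul_add]; exact add_mem hy hz
    · intro c y _ hy; rw [mul_smul_comm]; exact Submodule.smul_mem _ _ hy
  · rw [zero_mul, zero_mul]; exact zero_mem _
  · intro x y _ _ hx hy; rw [add_mul, add_mul]; exact add_mem hx hy
  · intro c x _ hx; rw [smul_mul_assoc, smul_mul_assoc]; exact Submodule.smul_mem _ _ hx

lemma D_mem_commutant {n m : ℕ} {V : Set (Matrix (Fin n) (Fin n) ℂ)}
    (A : Matrix (Fin n × Fin m) (Fin n × Fin m) ℂ)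
    (hcomm : ∀ a ∈ V, (a ⊗ₖ (1 : Matrix (Fin m) (Fin m) ℂ)) * A = A * (a ⊗ₖ 1))
    (w : Matrix (Fin m) (Fin m) ℂ) :
    (Matrix.of fun i j => ∑ p, ∑ q, (starRingEnd ℂ) (w p q) * A (i,p) (j,q)) ∈ commutant V := by
  intro a ha
  have key : ∀ (i j : Fin n) (p q : Fin m),
      ∑ l, a i l * A (l,p) (j,q) = ∑ l, A (i,p) (l,q) * a l j := by
    intro i j p q
    have he := congrFun (congrFun (hcomm a ha) (i,p)) (j,q)
    simp only [Matrix.mul_apply, Fintype.sum_prod_type, kroneckerMap_apply,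
      Matrix.one_apply, ite_mul, mul_ite, one_mul, zero_mul, mul_one, mul_zero,
      Finset.sum_ite_irrel, Finset.sum_const_zero,
      Finset.sum_ite_eq, Finset.sum_ite_eq', Finset.mem_univ, if_true] at he
    exact he
  ext i j
  rw [Matrix.mul_apply, Matrix.mul_apply]
  simp only [Matrix.of_apply, Finset.sum_mul, Finset.mul_sum]
  conv_lhs => rw [Finset.sum_comm]; enter [2, p]; rw [Finset.sum_comm]
  conv_rhs => rw [Finset.sum_comm]; enter [2, p]; rw [Finset.sum_comm]
  refine Finset.sum_congr rfl fun p _ => Finset.sum_congr rfl fun q _ => ?_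
  calc ∑ l, (starRingEnd ℂ) (w p q) * A (i,p) (l,q) * a l j
      = (starRingEnd ℂ) (w p q) * ∑ l, A (i,p) (l,q) * a l j := by
        rw [Finset.mul_sum]; exact Finset.sum_congr rfl fun l _ => by ring
    _ = (starRingEnd ℂ) (w p q) * ∑ l, a i l * A (l,p) (j,q) := by rw [key i j p q]
    _ = ∑ l, a i l * ((starRingEnd ℂ) (w p q) * A (l,p) (j,q)) := by
        rw [Finset.mul_sum]; exact Finset.sum_congr rfl fun l _ => by ring

lemma trace_slice {n m : ℕ} (v : Matrix (Fin n) (Fin n) ℂ) (w : Matrix (Fin m) (Fin m) ℂ)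
    (A : Matrix (Fin n × Fin m) (Fin n × Fin m) ℂ) :
    Matrix.trace ((v ⊗ₖ w) * Aᴴ)
      = Matrix.trace (v * (Matrix.of fun i j => ∑ p, ∑ q, (starRingEnd ℂ) (w p q) * A (i,p) (j,q))ᴴ) := by
  simp only [Matrix.trace, Matrix.diag, Matrix.mul_apply, Matrix.conjTranspose_apply,
    Fintype.sum_prod_type, kroneckerMap_apply, Matrix.of_apply, starRingEnd_apply,
    star_sum, star_mul', star_star, Finset.mul_sum]
  refine Finset.sum_congr rfl fun i _ => ?_
  conv_lhs => rw [Finset.sum_comm]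
  exact Finset.sum_congr rfl fun j _ => Finset.sum_congr rfl fun p _ =>
    Finset.sum_congr rfl fun q _ => by ring

lemma sum_swap4 {M : Type*} [AddCommMonoid M] {a b : ℕ} (f : Fin a → Fin a → Fin b → Fin b → M) :
    ∑ p, ∑ q, ∑ i, ∑ j, f p q i j = ∑ i, ∑ j, ∑ p, ∑ q, f p q i j := by
  conv_lhs => enter [2, p]; rw [Finset.sum_comm]
  conv_lhs => rw [Finset.sum_comm]
  conv_lhs => enter [2, i, 2, p]; rw [Finset.sum_comm]
  conv_lhs => enter [2, i]; rw [Finset.sum_comm]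

lemma E_mem_commutant {n m : ℕ} {W : Set (Matrix (Fin m) (Fin m) ℂ)}
    (A : Matrix (Fin n × Fin m) (Fin n × Fin m) ℂ)
    (hcomm : ∀ b ∈ W, ((1 : Matrix (Fin n) (Fin n) ℂ) ⊗ₖ b) * A = A * (1 ⊗ₖ b))
    (v : Matrix (Fin n) (Fin n) ℂ) :
    (Matrix.of fun p q => ∑ i, ∑ j, (starRingEnd ℂ) (v i j) * A (i,p) (j,q)) ∈ commutant W := by
  intro b hb
  have key : ∀ (i j : Fin n) (p q : Fin m),
      ∑ r, b p r * A (i,r) (j,q) = ∑ r, A (i,p) (j,r) * b r q := by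
    intro i j p q
    have he := congrFun (congrFun (hcomm b hb) (i,p)) (j,q)
    simp only [Matrix.mul_apply, Fintype.sum_prod_type, kroneckerMap_apply,
      Matrix.one_apply, ite_mul, mul_ite, one_mul, zero_mul, mul_one, mul_zero,
      Finset.sum_ite_irrel, Finset.sum_const_zero,
      Finset.sum_ite_eq, Finset.sum_ite_eq', Finset.mem_univ, if_true] at he
    exact he
  ext p q
  rw [Matrix.mul_apply, Matrix.mul_apply]
  simp only [Matrix.of_apply, Finset.sum_mul, Finset.mul_sum]
  conv_lhs => rw [Finset.sum_comm]; enter [2, i]; rw [Finset.sum_comm]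
  conv_rhs => rw [Finset.sum_comm]; enter [2, i]; rw [Finset.sum_comm]
  refine Finset.sum_congr rfl fun i _ => Finset.sum_congr rfl fun j _ => ?_
  calc ∑ r, (starRingEnd ℂ) (v i j) * A (i,p) (j,r) * b r q
      = (starRingEnd ℂ) (v i j) * ∑ r, A (i,p) (j,r) * b r q := by
        rw [Finset.mul_sum]; exact Finset.sum_congr rfl fun r _ => by ring
    _ = (starRingEnd ℂ) (v i j) * ∑ r, b p r * A (i,r) (j,q) := by rw [key i j p q]
    _ = ∑ r, b p r * ((starRingEnd ℂ) (v i j) * A (i,r) (j,q)) := by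
        rw [Finset.mul_sum]; exact Finset.sum_congr rfl fun r _ => by ring

lemma trace_slice_right {n m : ℕ} (v : Matrix (Fin n) (Fin n) ℂ) (w : Matrix (Fin m) (Fin m) ℂ)
    (A : Matrix (Fin n × Fin m) (Fin n × Fin m) ℂ) :
    Matrix.trace ((v ⊗ₖ w) * Aᴴ)
      = Matrix.trace (w * (Matrix.of fun p q => ∑ i, ∑ j, (starRingEnd ℂ) (v i j) * A (i,p) (j,q))ᴴ) := by
  simp only [Matrix.trace, Matrix.diag, Matrix.mul_apply, Matrix.conjTranspose_apply,
    Fintype.sum_prod_type, kroneckerMap_apply, Matrix.of_apply, starRingEnd_apply,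
    star_sum, star_mul', star_star, Finset.mul_sum]
  conv_lhs => enter [2, i]; rw [Finset.sum_comm]
  rw [show ∀ (f : Fin n → Fin n → Fin m → Fin m → ℂ),
      (∑ i, ∑ j, ∑ p, ∑ q, f i j p q) = ∑ p, ∑ q, ∑ i, ∑ j, f i j p q
    from fun f => (sum_swap4 fun p q i j => f i j p q).symm]
  exact Finset.sum_congr rfl fun p _ => Finset.sum_congr rfl fun q _ =>
    Finset.sum_congr rfl fun i _ => Finset.sum_congr rfl fun j _ => by ring


theorem cartesianProduct_isQuantumGraph {n m : ℕ}
    (SG : Submodule ℂ (Matrix (Fin n) (Fin n) ℂ))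
    (MG : StarSubalgebra ℂ (Matrix (Fin n) (Fin n) ℂ))
    (SH : Submodule ℂ (Matrix (Fin m) (Fin m) ℂ))
    (MH : StarSubalgebra ℂ (Matrix (Fin m) (Fin m) ℂ))
    (hG : IsQuantumGraph SG (MG : Set (Matrix (Fin n) (Fin n) ℂ)))
    (hH : IsQuantumGraph SH (MH : Set (Matrix (Fin m) (Fin m) ℂ))) :
    IsQuantumGraph (tensorSpan (SG : Set (Matrix (Fin n) (Fin n) ℂ)) (commutant (MH : Set (Matrix (Fin m) (Fin m) ℂ))) ⊔ tensorSpan (commutant (MG : Set (Matrix (Fin n) (Fin n) ℂ))) (SH : Set (Matrix (Fin m) (Fin m) ℂ))) ((tensorSpan (MG : Set (Matrix (Fin n) (Fin n) ℂ)) (MH : Set (Matrix (Fin m) (Fin m) ℂ)) : Submodule ℂ (Matrix (Fin n × Fin m) (Fin n × Fin m) ℂ)) : Set (Matrix (Fin n × Fin m) (Fin n × Fin m) ℂ)) := by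
  classical
  obtain ⟨hGstar, hGbim, hGtr⟩ := hG
  obtain ⟨hHstar, hHbim, hHtr⟩ := hH
  set s1 : Set (Matrix (Fin n × Fin m) (Fin n × Fin m) ℂ) :=
    {x | ∃ v ∈ (SG : Set (Matrix (Fin n) (Fin n) ℂ)),
      ∃ w ∈ commutant (MH : Set (Matrix (Fin m) (Fin m) ℂ)), x = v ⊗ₖ w} with hs1
  set s2 : Set (Matrix (Fin n × Fin m) (Fin n × Fin m) ℂ) :=
    {x | ∃ v ∈ commutant (MG : Set (Matrix (Fin n) (Fin n) ℂ)),
      ∃ w ∈ (SH : Set (Matrix (Fin m) (Fin m) ℂ)), x = v ⊗ₖ w} with hs2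
  have hSK : tensorSpan (SG : Set (Matrix (Fin n) (Fin n) ℂ))
        (commutant (MH : Set (Matrix (Fin m) (Fin m) ℂ)))
      ⊔ tensorSpan (commutant (MG : Set (Matrix (Fin n) (Fin n) ℂ)))
        (SH : Set (Matrix (Fin m) (Fin m) ℂ))
      = Submodule.span ℂ (s1 ∪ s2) := (Submodule.span_union s1 s2).symm
  have hcomm1 : ∀ A ∈ commutant ((tensorSpan (MG : Set (Matrix (Fin n) (Fin n) ℂ))
      (MH : Set (Matrix (Fin m) (Fin m) ℂ)) : Submodule ℂ _) : Set _),
      ∀ a ∈ (MG : Set (Matrix (Fin n) (Fin n) ℂ)),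
      (a ⊗ₖ (1 : Matrix (Fin m) (Fin m) ℂ)) * A = A * (a ⊗ₖ 1) := by
    intro A hA a ha
    exact (hA _ (Submodule.subset_span ⟨a, ha, 1, MH.one_mem, rfl⟩)).symm
  have hcomm2 : ∀ A ∈ commutant ((tensorSpan (MG : Set (Matrix (Fin n) (Fin n) ℂ))
      (MH : Set (Matrix (Fin m) (Fin m) ℂ)) : Submodule ℂ _) : Set _),
      ∀ b ∈ (MH : Set (Matrix (Fin m) (Fin m) ℂ)),
      ((1 : Matrix (Fin n) (Fin n) ℂ) ⊗ₖ b) * A = A * (1 ⊗ₖ b) := by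
    intro A hA b hb
    exact (hA _ (Submodule.subset_span ⟨1, MG.one_mem, b, hb, rfl⟩)).symm
  have hstruct : ∀ A ∈ commutant ((tensorSpan (MG : Set (Matrix (Fin n) (Fin n) ℂ))
      (MH : Set (Matrix (Fin m) (Fin m) ℂ)) : Submodule ℂ _) : Set _),
      A ∈ tensorSpan (commutant (MG : Set (Matrix (Fin n) (Fin n) ℂ)))
        (commutant (MH : Set (Matrix (Fin m) (Fin m) ℂ))) :=
    fun A hA => mem_tensorSpan_commutant A (hcomm1 A hA) (hcomm2 A hA)
  have hMGstar : ∀ A ∈ (MG : Set (Matrix (Fin n) (Fin n) ℂ)), Aᴴ ∈ (MG : Set _) := by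
    intro A hA
    simpa [Matrix.star_eq_conjTranspose] using star_mem (s := MG) (SetLike.mem_coe.mp hA)
  have hMHstar : ∀ A ∈ (MH : Set (Matrix (Fin m) (Fin m) ℂ)), Aᴴ ∈ (MH : Set _) := by
    intro A hA
    simpa [Matrix.star_eq_conjTranspose] using star_mem (s := MH) (SetLike.mem_coe.mp hA)
  refine ⟨?_, ?_, ?_⟩
  · intro X hX
    rw [hSK] at hX ⊢
    refine Submodule.span_induction
      (p := fun X _ => Xᴴ ∈ Submodule.span ℂ (s1 ∪ s2)) ?_ ?_ ?_ ?_ hX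
    · rintro x (⟨v, hv, w, hw, rfl⟩ | ⟨v, hv, w, hw, rfl⟩)
      · rw [kron_conjT]
        exact Submodule.subset_span
          (Or.inl ⟨vᴴ, hGstar v hv, wᴴ, commutant_star hMHstar hw, rfl⟩)
      · rw [kron_conjT]
        exact Submodule.subset_span
          (Or.inr ⟨vᴴ, commutant_star hMGstar hv, wᴴ, hHstar w hw, rfl⟩)
    · simp
    · intro x y _ _ hx hy
      rw [Matrix.conjTranspose_add]
      exact add_mem hx hy
    · intro c x _ hx
      rw [Matrix.conjTranspose_smul]
      exact Submodule.smul_mem _ _ hx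
  · intro A hA B hB X hX
    have hA' := hstruct A hA
    have hB' := hstruct B hB
    rw [hSK] at hX ⊢
    refine Submodule.span_induction
      (p := fun X _ => A * X * B ∈ Submodule.span ℂ (s1 ∪ s2)) ?_ ?_ ?_ ?_ hX
    · rintro x (⟨v, hv, w, hw, rfl⟩ | ⟨v, hv, w, hw, rfl⟩)
      · refine Submodule.span_mono Set.subset_union_left
          (mul_kron_mul_mem hGbim ?_ hA' hB' hv hw)
        exact fun a ha b hb x hx => commutant_mul_mem (commutant_mul_mem ha hx) hb
      · refine Submodule.span_mono Set.subset_union_right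
          (mul_kron_mul_mem ?_ hHbim hA' hB' hv hw)
        exact fun a ha b hb x hx => commutant_mul_mem (commutant_mul_mem ha hx) hb
    · show A * 0 * B ∈ Submodule.span ℂ (s1 ∪ s2)
      rw [mul_zero, zero_mul]; exact zero_mem _
    · intro x y _ _ hx hy
      rw [mul_add, add_mul]
      exact add_mem hx hy
    · intro c x _ hx
      rw [mul_smul_comm, smul_mul_assoc]
      exact Submodule.smul_mem _ _ hx
  · intro X hX A hA
    rw [hSK] at hX
    refine Submodule.span_induction
      (p := fun X _ => Matrix.trace (X * Aᴴ) = 0) ?_ ?_ ?_ ?_ hX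
    · rintro x (⟨v, hv, w, hw, rfl⟩ | ⟨v, hv, w, hw, rfl⟩)
      · rw [trace_slice]
        exact hGtr v hv _ (D_mem_commutant A (hcomm1 A hA) w)
      · rw [trace_slice_right]
        exact hHtr w hw _ (E_mem_commutant A (hcomm2 A hA) v)
    · show Matrix.trace ((0 : Matrix (Fin n × Fin m) (Fin n × Fin m) ℂ) * Aᴴ) = 0
      rw [zero_mul, Matrix.trace_zero]
    · intro x y _ _ hx hy
      rw [add_mul, Matrix.trace_add, hx, hy, add_zero]
    · intro c x _ hx
      rw [Matrix.smul_mul, Matrix.trace_smul, hx, smul_zero]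

end
end

section
/- Let G and H be finite simple graphs with vertex sets V and W. In the algebra of matrices indexed by V×W, identified with M_V(ℂ) ⊗ M_W(ℂ) via E_{(v1,w1),(v2,w2)} = E_{v1 v2} ⊗ₖ E_{w1 w2}, the ℂ-span of the matrix units E_{(v1,w1),(v2,w2)} over all pairs adjacent in the lexicographic product G[H] (i.e., v1 adjacent to v2 in G, or v1 = v2 and w1 adjacent to w2 in H) equals S_G ⊗ M_W(ℂ) + D_V ⊗ S_H. -/
open Matrix Kronecker BigOperators

noncomputable section

lemma stdBasis_kron {V W : Type*} [Fintype V] [DecidableEq V] [Fintype W] [DecidableEq W]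
    (v1 v2 : V) (w1 w2 : W) :
    (Matrix.single v1 v2 (1:ℂ)) ⊗ₖ (Matrix.single w1 w2 1)
      = Matrix.single (v1,w1) (v2,w2) 1 := by
  ext ⟨a,b⟩ ⟨c,d⟩
  simp [Matrix.single, Matrix.kroneckerMap_apply, Prod.ext_iff]
  aesop

lemma kron_mem_span {I J : Type*} [Fintype I] [Fintype J]
    {S : Set (Matrix I I ℂ)} {T : Set (Matrix J J ℂ)} {A : Matrix I I ℂ} {B : Matrix J J ℂ}
    (hA : A ∈ Submodule.span ℂ S) (hB : B ∈ Submodule.span ℂ T) :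
    A ⊗ₖ B ∈ Submodule.span ℂ {x : Matrix (I×J) (I×J) ℂ | ∃ a ∈ S, ∃ b ∈ T, x = a ⊗ₖ b} := by
  induction hA using Submodule.span_induction with
  | mem a ha =>
      induction hB using Submodule.span_induction with
      | mem b hb => exact Submodule.subset_span ⟨a, ha, b, hb, rfl⟩
      | zero => simp [Matrix.kronecker_zero]
      | add x y _ _ hx hy => rw [Matrix.kronecker_add]; exact add_mem hx hy
      | smul r x _ hx => rw [Matrix.kronecker_smul]; exact Submodule.smul_mem _ _ hx
  | zero => simp [Matrix.zero_kronecker]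
  | add x y _ _ hx hy => rw [Matrix.add_kronecker]; exact add_mem hx hy
  | smul r x _ hx => rw [Matrix.smul_kronecker]; exact Submodule.smul_mem _ _ hx

lemma mem_span_std {I : Type*} [Fintype I] [DecidableEq I] (B : Matrix I I ℂ) :
    B ∈ Submodule.span ℂ {x : Matrix I I ℂ | ∃ i j, x = Matrix.single i j (1:ℂ)} := by
  rw [matrix_eq_sum_single B]
  refine Submodule.sum_mem _ fun i _ => Submodule.sum_mem _ fun j _ => ?_
  have : Matrix.single i j (B i j) = B i j • Matrix.single i j 1 := by
    ext a b; simp [Matrix.single]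
  rw [this]
  exact Submodule.smul_mem _ _ (Submodule.subset_span ⟨i, j, rfl⟩)

lemma diag_mem_span {I : Type*} [Fintype I] [DecidableEq I] {A : Matrix I I ℂ}
    (h : A.IsDiag) :
    A ∈ Submodule.span ℂ {x : Matrix I I ℂ | ∃ v, x = Matrix.single v v (1:ℂ)} := by
  have : A = ∑ v, A v v • Matrix.single v v 1 := by
    ext i j
    by_cases hij : i = j
    · subst hij; simp [Matrix.sum_apply, Matrix.single]
    · simp [Matrix.sum_apply, Matrix.single, h hij]
      refine (Finset.sum_eq_zero fun x _ => ?_).symm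
      rw [if_neg]
      rintro ⟨rfl, rfl⟩
      exact hij rfl
  rw [this]
  exact Submodule.sum_mem _ fun v _ =>
    Submodule.smul_mem _ _ (Submodule.subset_span ⟨v, rfl⟩)

lemma stdBasis_isDiag {I : Type*} [Fintype I] [DecidableEq I] (v : I) :
    (Matrix.single v v (1:ℂ)).IsDiag := by
  intro i j hij
  simp [Matrix.single]
  aesop

theorem lexicographicProduct_classical_span {V W : Type*}
    [Fintype V] [DecidableEq V] [Fintype W] [DecidableEq W]
    (G : SimpleGraph V) (H : SimpleGraph W) :
    Submodule.span ℂ {x : Matrix (V × W) (V × W) ℂ |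
        ∃ v₁ w₁ v₂ w₂, (G.Adj v₁ v₂ ∨ (v₁ = v₂ ∧ H.Adj w₁ w₂)) ∧
          x = Matrix.single (v₁, w₁) (v₂, w₂) 1}
      = tensorSpan (graphSpan G : Set (Matrix V V ℂ)) (Set.univ : Set (Matrix W W ℂ))
          ⊔ tensorSpan {A : Matrix V V ℂ | A.IsDiag} (graphSpan H : Set (Matrix W W ℂ)) := by
  apply le_antisymm
  · rw [Submodule.span_le]
    rintro x ⟨v1, w1, v2, w2, hadj, rfl⟩
    rw [SetLike.mem_coe, ← stdBasis_kron]
    rcases hadj with h | ⟨rfl, h⟩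
    · exact Submodule.mem_sup_left (Submodule.subset_span
        ⟨_, Submodule.subset_span ⟨v1, v2, h, rfl⟩, _, Set.mem_univ _, rfl⟩)
    · exact Submodule.mem_sup_right (Submodule.subset_span
        ⟨_, stdBasis_isDiag v1, _, Submodule.subset_span ⟨w1, w2, h, rfl⟩, rfl⟩)
  · apply sup_le
    · rw [tensorSpan, Submodule.span_le]
      rintro x ⟨a, ha, b, -, rfl⟩
      have hmem := kron_mem_span (S := {x : Matrix V V ℂ | ∃ v w, G.Adj v w ∧
          x = Matrix.single v w 1})
        (T := {x : Matrix W W ℂ | ∃ i j, x = Matrix.single i j (1:ℂ)}) ha (mem_span_std b)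
      refine Submodule.span_le.mpr ?_ hmem
      rintro y ⟨a0, ⟨u1, u2, hu, rfl⟩, b0, ⟨x1, x2, rfl⟩, rfl⟩
      rw [SetLike.mem_coe, stdBasis_kron]
      exact Submodule.subset_span ⟨u1, x1, u2, x2, Or.inl hu, rfl⟩
    · rw [tensorSpan, Submodule.span_le]
      rintro x ⟨a, ha, b, hb, rfl⟩
      have hmem := kron_mem_span
        (S := {x : Matrix V V ℂ | ∃ v, x = Matrix.single v v (1:ℂ)})
        (T := {x : Matrix W W ℂ | ∃ v w, H.Adj v w ∧ x = Matrix.single v w 1})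
        (diag_mem_span ha) hb
      refine Submodule.span_le.mpr ?_ hmem
      rintro y ⟨a0, ⟨u, rfl⟩, b0, ⟨x1, x2, hx, rfl⟩, rfl⟩
      rw [SetLike.mem_coe, stdBasis_kron]
      exact Submodule.subset_span ⟨u, x1, u, x2, Or.inr ⟨rfl, hx⟩, rfl⟩


end
end

section
/- Let (S, M) be a quantum graph on M_n(ℂ), let b, c, k ≥ 1, and suppose {Q_T}, indexed by the b-element subsets T of {1,…,c}, is a family of self-adjoint idempotents in M ⊗ M_k(ℂ) with ∑_T Q_T = I and Q_{T1} (X ⊗ₖ I_k) Q_{T2} = 0 for all X ∈ S whenever T1 ∩ T2 ≠ ∅. For each a ∈ {1,…,c} set P_a = ∑_{T : a ∈ T} Q_T. Then the P_a are pairwise commuting self-adjoint idempotents in M ⊗ M_k(ℂ) satisfying ∑_{T ⊆ {1,…,c}, |T| = b} ∏_{a ∈ T} P_a = I and P_a (X ⊗ₖ I_k) P_a = 0 for all X ∈ S and all a; that is, they form a quantum b-fold coloring of (S, M) using c colors. -/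
open Matrix Kronecker BigOperators

noncomputable section

lemma frob {m p : Type*} [Fintype m] [Fintype p] (A : Matrix m p ℂ) :
    Matrix.trace (Aᴴ * A) = ((∑ j, ∑ i, Complex.normSq (A i j) : ℝ) : ℂ) := by
  simp [Matrix.trace, Matrix.diag, Matrix.mul_apply, Complex.normSq_eq_conj_mul_self]

lemma sum_psd_zero {α : Type*} {m p : Type*} [Fintype m] [Fintype p]
    (s : Finset α) (A : α → Matrix m p ℂ)
    (h : ∑ t ∈ s, (A t)ᴴ * (A t) = 0) : ∀ t ∈ s, A t = 0 := by
  intro t ht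
  have htr : ∑ t ∈ s, Matrix.trace ((A t)ᴴ * (A t)) = 0 := by
    rw [← Matrix.trace_sum, h, Matrix.trace_zero]
  have htr' : ∑ t ∈ s, ((∑ j, ∑ i, Complex.normSq (A t i j) : ℝ) : ℂ) = 0 := by
    simpa [frob] using htr
  rw [← Complex.ofReal_sum] at htr'
  have hre : ∑ t ∈ s, (∑ j, ∑ i, Complex.normSq (A t i j)) = 0 :=
    Complex.ofReal_eq_zero.mp htr'
  have h0 : (∑ j, ∑ i, Complex.normSq (A t i j)) = 0 := by
    have := (Finset.sum_eq_zero_iff_of_nonneg (fun t _ => Finset.sum_nonneg fun j _ => Finset.sum_nonneg fun i _ => Complex.normSq_nonneg _)).mp hre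
    exact this t ht
  ext i j
  have := (Finset.sum_eq_zero_iff_of_nonneg (fun j _ => Finset.sum_nonneg fun i _ => Complex.normSq_nonneg _)).mp h0 j (Finset.mem_univ j)
  have := (Finset.sum_eq_zero_iff_of_nonneg (fun i _ => Complex.normSq_nonneg _)).mp this i (Finset.mem_univ i)
  simpa [Complex.normSq_eq_zero] using this

lemma proj_orth {α : Type*} {m : Type*} [Fintype m] [DecidableEq α] [DecidableEq m]
    (s : Finset α) (Q : α → Matrix m m ℂ)
    (hsa : ∀ t ∈ s, (Q t)ᴴ = Q t) (hidem : ∀ t ∈ s, Q t * Q t = Q t)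
    (hsum : ∑ t ∈ s, Q t = 1) :
    ∀ t₁ ∈ s, ∀ t₂ ∈ s, t₁ ≠ t₂ → Q t₁ * Q t₂ = 0 := by
  intro t₁ h₁ t₂ h₂ hne
  have key : ∑ t ∈ s.erase t₂, (Q t * Q t₂)ᴴ * (Q t * Q t₂) = 0 := by
    have e1 : ∑ t ∈ s, Q t₂ * Q t * Q t₂ = Q t₂ := by
      calc ∑ t ∈ s, Q t₂ * Q t * Q t₂ = Q t₂ * (∑ t ∈ s, Q t) * Q t₂ := by
            rw [Finset.mul_sum, Finset.sum_mul]
        _ = Q t₂ := by rw [hsum, mul_one, hidem t₂ h₂]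
    have e2 : ∑ t ∈ s.erase t₂, Q t₂ * Q t * Q t₂ = 0 := by
      have := Finset.sum_erase_add s (fun t => Q t₂ * Q t * Q t₂) h₂
      rw [e1] at this
      have e3 : Q t₂ * Q t₂ * Q t₂ = Q t₂ := by rw [hidem t₂ h₂, hidem t₂ h₂]
      rw [e3] at this
      linear_combination (norm := abel) this
    rw [← e2]
    apply Finset.sum_congr rfl
    intro t ht
    have hts := Finset.mem_of_mem_erase ht
    rw [Matrix.conjTranspose_mul, hsa t hts, hsa t₂ h₂]
    rw [Matrix.mul_assoc, Matrix.mul_assoc, ← Matrix.mul_assoc (Q t), hidem t hts]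
  have h0 := sum_psd_zero _ _ key t₁ (Finset.mem_erase.mpr ⟨hne, h₁⟩)
  exact h0

lemma sum_filter_mul {α : Type*} {m : Type*} [Fintype m] [DecidableEq α] [DecidableEq m]
    (s : Finset α) (Q : α → Matrix m m ℂ)
    (horth : ∀ t₁ ∈ s, ∀ t₂ ∈ s, t₁ ≠ t₂ → Q t₁ * Q t₂ = 0)
    (hidem : ∀ t ∈ s, Q t * Q t = Q t)
    (p q : α → Prop) [DecidablePred p] [DecidablePred q] :
    (∑ t ∈ s.filter p, Q t) * (∑ t ∈ s.filter q, Q t)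
      = ∑ t ∈ s.filter (fun t => p t ∧ q t), Q t := by
  rw [Finset.sum_mul]
  rw [show (s.filter fun t => p t ∧ q t) = (s.filter p).filter q by
    rw [Finset.filter_filter], Finset.sum_filter (s := s.filter p) (p := q)]
  apply Finset.sum_congr rfl
  intro t ht
  have hts := Finset.mem_of_mem_filter t ht
  rw [Finset.mul_sum]
  have : ∀ t' ∈ s.filter q, Q t * Q t' = if t' = t then (if q t then Q t else 0) else 0 := by
    intro t' ht'
    have ht's := Finset.mem_of_mem_filter t' ht'
    by_cases h : t' = t
    · subst h
      simp [(Finset.mem_filter.mp ht').2, hidem t' ht's]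
    · simp [h, horth t hts t' ht's (fun e => h e.symm)]
  rw [Finset.sum_congr rfl this, Finset.sum_ite_eq' (s.filter q) t]
  by_cases hq : q t
  · simp [Finset.mem_filter, hts, hq]
  · simp [Finset.mem_filter, hq]


lemma list_prod_filter {α β : Type*} {m : Type*} [Fintype m] [DecidableEq α] [DecidableEq m]
    (s : Finset α) (Q : α → Matrix m m ℂ)
    (horth : ∀ t₁ ∈ s, ∀ t₂ ∈ s, t₁ ≠ t₂ → Q t₁ * Q t₂ = 0)
    (hidem : ∀ t ∈ s, Q t * Q t = Q t)
    (hsum : ∑ t ∈ s, Q t = 1)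
    (pr : β → α → Prop) [∀ b, DecidablePred (pr b)] (l : List β) :
    ((l.map (fun b => ∑ t ∈ s.filter (pr b), Q t)).prod)
      = ∑ t ∈ s.filter (fun t => ∀ b ∈ l, pr b t), Q t := by
  induction l with
  | nil => simpa using hsum.symm
  | cons b l ih =>
      rw [List.map_cons, List.prod_cons, ih,
        sum_filter_mul s Q horth hidem (pr b) (fun t => ∀ b' ∈ l, pr b' t)]
      apply Finset.sum_congr _ (fun _ _ => rfl)
      apply Finset.filter_congr
      intro t _
      simp [List.forall_mem_cons]

theorem pvm_to_qbFold {n : ℕ}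
    (S : Submodule ℂ (Matrix (Fin n) (Fin n) ℂ))
    (M : StarSubalgebra ℂ (Matrix (Fin n) (Fin n) ℂ))
    (hQG : IsQuantumGraph S (M : Set (Matrix (Fin n) (Fin n) ℂ)))
    (b c k : ℕ) (hb : 1 ≤ b) (hc : 1 ≤ c) (hk : 1 ≤ k)
    (Q : Finset (Fin c) → Matrix (Fin n × Fin k) (Fin n × Fin k) ℂ)
    (hmem : ∀ T ∈ Finset.univ.powersetCard b,
      Q T ∈ tensorSpan (M : Set (Matrix (Fin n) (Fin n) ℂ))
        (Set.univ : Set (Matrix (Fin k) (Fin k) ℂ)))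
    (hsa : ∀ T ∈ Finset.univ.powersetCard b, (Q T)ᴴ = Q T)
    (hidem : ∀ T ∈ Finset.univ.powersetCard b, Q T * Q T = Q T)
    (hsum : (∑ T ∈ Finset.univ.powersetCard b, Q T) = 1)
    (horth : ∀ X ∈ S, ∀ T₁ ∈ Finset.univ.powersetCard b, ∀ T₂ ∈ Finset.univ.powersetCard b,
      (T₁ ∩ T₂).Nonempty → Q T₁ * (X ⊗ₖ (1 : Matrix (Fin k) (Fin k) ℂ)) * Q T₂ = 0) :
    IsQBFoldColoring S (M : Set (Matrix (Fin n) (Fin n) ℂ)) b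
      (fun a => ∑ T ∈ (Finset.univ.powersetCard b).filter (fun T => a ∈ T), Q T) := by
  set Pb : Finset (Finset (Fin c)) := Finset.univ.powersetCard b with hPb
  have horthQ : ∀ T₁ ∈ Pb, ∀ T₂ ∈ Pb, T₁ ≠ T₂ → Q T₁ * Q T₂ = 0 :=
    proj_orth Pb Q hsa hidem hsum
  refine ⟨?_, ?_, ?_, ?_, ?_, ?_⟩
  · intro a
    exact Submodule.sum_mem _ fun T hT => hmem T (Finset.mem_of_mem_filter T hT)
  · intro a a'
    simp only
    rw [sum_filter_mul Pb Q horthQ hidem, sum_filter_mul Pb Q horthQ hidem]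
    apply Finset.sum_congr _ (fun _ _ => rfl)
    apply Finset.filter_congr
    intro T _
    exact ⟨fun ⟨h1, h2⟩ => ⟨h2, h1⟩, fun ⟨h1, h2⟩ => ⟨h2, h1⟩⟩
  · intro a
    simp only
    rw [Matrix.conjTranspose_sum]
    exact Finset.sum_congr rfl fun T hT => hsa T (Finset.mem_of_mem_filter T hT)
  · intro a
    simp only
    rw [sum_filter_mul Pb Q horthQ hidem]
    apply Finset.sum_congr _ (fun _ _ => rfl)
    apply Finset.filter_congr
    intro T _
    simp
  · have hprod : ∀ T ∈ Pb,
        finsetProd (fun a => ∑ T' ∈ Pb.filter (fun T' => a ∈ T'), Q T') T = Q T := by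
      intro T hT
      unfold finsetProd
      rw [list_prod_filter Pb Q horthQ hidem hsum (fun a T' => a ∈ T') (T.sort (· ≤ ·))]
      refine (Finset.sum_congr ?_ fun _ _ => rfl).trans (Finset.sum_singleton _ T)
      · ext T'
        simp only [Finset.mem_filter, Finset.mem_singleton]
        constructor
        · rintro ⟨hT'Pb, hsub⟩
          have hsub' : T ⊆ T' := fun a ha => hsub a ((Finset.mem_sort _).mpr ha)
          have hcard : T'.card ≤ T.card := by
            rw [(Finset.mem_powersetCard.mp hT'Pb).2, (Finset.mem_powersetCard.mp hT).2]
          exact (Finset.eq_of_subset_of_card_le hsub' hcard).symm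
        · rintro rfl
          exact ⟨hT, fun a ha => (Finset.mem_sort _).mp ha⟩
    rw [Finset.sum_congr rfl hprod]
    exact hsum
  · intro X hX a
    simp only
    rw [Finset.sum_mul, Finset.sum_mul]
    apply Finset.sum_eq_zero
    intro T₁ hT₁
    rw [Finset.mul_sum]
    apply Finset.sum_eq_zero
    intro T₂ hT₂
    have h1 := Finset.mem_filter.mp hT₁
    have h2 := Finset.mem_filter.mp hT₂
    exact horth X hX T₁ h1.1 T₂ h2.1 ⟨a, Finset.mem_inter.mpr ⟨h1.2, h2.2⟩⟩


end
end

section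
/- Let G be a finite simple graph with vertex set V and associated quantum graph (S_G, D_V), and let b, c ≥ 1. Then G admits a classical b-fold coloring with c colors (an assignment to each vertex v of a b-element subset φ(v) ⊆ {1,…,c} such that φ(v) ∩ φ(w) = ∅ whenever v is adjacent to w) if and only if (S_G, D_V) admits a local b-fold coloring using c colors. Consequently the local b-fold chromatic number of (S_G, D_V) equals the classical b-fold chromatic number χ_b(G). -/
open Matrix Kronecker BigOperators

noncomputable section

lemma list_diag_prod {V : Type*} [Fintype V] [DecidableEq V] {c : ℕ} (d : Fin c → V → ℂ) :
    ∀ L : List (Fin c), (L.map (fun a => Matrix.diagonal (d a))).prod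
      = Matrix.diagonal (fun v => (L.map (fun a => d a v)).prod) := by
  intro L
  induction L with
  | nil => simp [Matrix.diagonal_one]
  | cons a L ih => simp [ih, Matrix.diagonal_mul_diagonal]

lemma sorted_prod_eq {V : Type*} [DecidableEq V] {c : ℕ} (d : Fin c → V → ℂ)
    (T : Finset (Fin c)) (v : V) :
    (List.map (fun a => d a v) (T.sort (· ≤ ·))).prod = ∏ a ∈ T, d a v := by
  rw [← Finset.prod_map_toList]
  exact List.Perm.prod_eq (List.Perm.map _ (Finset.sort_perm_toList T _))

lemma finsetProd_diagonal {V : Type*} [Fintype V] [DecidableEq V] {c : ℕ}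
    (d : Fin c → V → ℂ) (T : Finset (Fin c)) :
    finsetProd (fun a => Matrix.diagonal (d a)) T
      = Matrix.diagonal (fun v => ∏ a ∈ T, d a v) := by
  rw [finsetProd, list_diag_prod]
  simp only [sorted_prod_eq]

lemma diagonal_finset_sum {V : Type*} [Fintype V] [DecidableEq V] {ι : Type*}
    (s : Finset ι) (f : ι → V → ℂ) :
    ∑ t ∈ s, Matrix.diagonal (f t) = Matrix.diagonal (fun v => ∑ t ∈ s, f t v) := by
  classical
  induction s using Finset.cons_induction with
  | empty => simp
  | cons a s ha ih =>
      rw [Finset.sum_cons, ih, Matrix.diagonal_add]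
      exact congrArg _ (funext fun v => (Finset.sum_cons (f := fun t => f t v) ha).symm)

lemma choose_eq_one' {n b : ℕ} (hb : 1 ≤ b) (h : n.choose b = 1) : n = b := by
  rcases lt_trichotomy n b with hlt | heq | hgt
  · rw [Nat.choose_eq_zero_of_lt hlt] at h; omega
  · exact heq
  · have := Nat.choose_le_choose b (show b + 1 ≤ n by omega)
    rw [Nat.choose_succ_self_right] at this
    omega

lemma key_iff {V : Type*} [Fintype V] [DecidableEq V]
    (G : SimpleGraph V) (b c : ℕ) (hb : 1 ≤ b) :
    (∃ φ : V → Finset (Fin c), (∀ v, (φ v).card = b) ∧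
        ∀ v w, G.Adj v w → φ v ∩ φ w = ∅)
      ↔ HasLocalBFoldColoring (graphSpan G) {A : Matrix V V ℂ | A.IsDiag} b c := by
  classical
  constructor
  · rintro ⟨φ, hcard, hadj⟩
    set d : Fin c → V → ℂ := fun a v => if a ∈ φ v then 1 else 0 with hd
    have hprod : ∀ (T : Finset (Fin c)) (v : V),
        (∏ a ∈ T, d a v) = if T ⊆ φ v then 1 else 0 := by
      intro T v
      by_cases hT : T ⊆ φ v
      · rw [if_pos hT]
        exact Finset.prod_eq_one (fun a ha => by simp [hd, hT ha])
      · rw [if_neg hT]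
        obtain ⟨a, haT, haφ⟩ := Finset.not_subset.mp hT
        exact Finset.prod_eq_zero haT (by simp [hd, haφ])
    refine ⟨fun a => Matrix.diagonal (d a), fun a => Matrix.isDiag_diagonal _, ?_, ?_, ?_, ?_, ?_⟩
    · intro a a'
      rw [Matrix.diagonal_mul_diagonal, Matrix.diagonal_mul_diagonal]
      exact congrArg _ (funext fun v => mul_comm _ _)
    · intro a
      rw [Matrix.diagonal_conjTranspose]
      refine congrArg _ (funext fun v => ?_)
      rw [Pi.star_apply]
      by_cases h : a ∈ φ v <;> simp [hd, h]
    · intro a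
      rw [Matrix.diagonal_mul_diagonal]
      refine congrArg _ (funext fun v => ?_)
      by_cases h : a ∈ φ v <;> simp [hd, h]
    · rw [Finset.sum_congr rfl (fun T _ => finsetProd_diagonal d T), diagonal_finset_sum,
        ← Matrix.diagonal_one]
      refine congrArg _ (funext fun v => ?_)
      simp only [hprod]
      rw [Finset.sum_boole]
      have : (Finset.univ.powersetCard b).filter (· ⊆ φ v) = (φ v).powersetCard b := by
        ext T
        simp only [Finset.mem_filter, Finset.mem_powersetCard]
        constructor
        · rintro ⟨⟨-, h2⟩, h3⟩; exact ⟨h3, h2⟩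
        · rintro ⟨h1, h2⟩; exact ⟨⟨Finset.subset_univ T, h2⟩, h1⟩
      rw [this, Finset.card_powersetCard, hcard v, Nat.choose_self, Nat.cast_one]
    · intro X hX a
      have hgen : ∀ x ∈ {x : Matrix V V ℂ | ∃ v w, G.Adj v w ∧ x = Matrix.single v w 1},
          Matrix.diagonal (d a) * x * Matrix.diagonal (d a) = 0 := by
        rintro x ⟨v, w, hvw, rfl⟩
        have hdisj : d a v * d a w = 0 := by
          by_cases hv : a ∈ φ v
          · have hw : a ∉ φ w := fun hw => (Finset.eq_empty_iff_forall_notMem.mp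
              (hadj v w hvw) a) (Finset.mem_inter.mpr ⟨hv, hw⟩)
            simp [hd, hw]
          · simp [hd, hv]
        ext i j
        rw [Matrix.mul_diagonal, Matrix.diagonal_mul, Matrix.zero_apply]
        rcases eq_or_ne i v with rfl | hi
        · rcases eq_or_ne j w with rfl | hj
          · rw [Matrix.single_apply_same, mul_one]
            exact hdisj
          · rw [Matrix.single_apply_of_col_ne i i (Ne.symm hj), mul_zero, zero_mul]
        · rw [Matrix.single_apply_of_row_ne (Ne.symm hi), mul_zero, zero_mul]
      refine Submodule.span_induction hgen ?_ ?_ ?_ hX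
      · simp
      · intro x y _ _ hx hy
        rw [Matrix.mul_add, Matrix.add_mul, hx, hy, add_zero]
      · intro r x _ hx
        rw [Matrix.mul_smul, Matrix.smul_mul, hx, smul_zero]
  · rintro ⟨P, hmem, _hcomm, _hherm, hidem, hsum, hedge⟩
    set d : Fin c → V → ℂ := fun a v => P a v v with hd
    have hPd : ∀ a, P a = Matrix.diagonal (d a) :=
      fun a => ((Matrix.isDiag_iff_diagonal_diag (P a)).mp (hmem a)).symm
    have hd01 : ∀ a v, d a v = 0 ∨ d a v = 1 := by
      intro a v
      have h1 := hidem a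
      rw [hPd a, Matrix.diagonal_mul_diagonal] at h1
      have h2 := congrFun (Matrix.diagonal_injective h1) v
      have h2 : d a v * d a v = d a v := h2
      rcases eq_or_ne (d a v) 0 with h | h
      · exact Or.inl h
      · exact Or.inr (mul_left_cancel₀ h (by rw [h2, mul_one]))
    set φ : V → Finset (Fin c) := fun v => Finset.univ.filter (fun a => d a v = 1) with hφ
    have hprod : ∀ (T : Finset (Fin c)) (v : V),
        (∏ a ∈ T, d a v) = if T ⊆ φ v then 1 else 0 := by
      intro T v
      by_cases hT : T ⊆ φ v
      · rw [if_pos hT]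
        refine Finset.prod_eq_one (fun a ha => ?_)
        have := hT ha
        simp only [hφ, Finset.mem_filter] at this
        exact this.2
      · rw [if_neg hT]
        obtain ⟨a, haT, haφ⟩ := Finset.not_subset.mp hT
        refine Finset.prod_eq_zero haT ?_
        rcases hd01 a v with h | h
        · exact h
        · exact absurd (Finset.mem_filter.mpr ⟨Finset.mem_univ a, h⟩) haφ
    refine ⟨φ, ?_, ?_⟩
    · intro v
      have h1 : ∀ T ∈ Finset.univ.powersetCard b,
          finsetProd P T = Matrix.diagonal (fun v => ∏ a ∈ T, d a v) := by
        intro T _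
        rw [show P = fun a => Matrix.diagonal (d a) from funext hPd]
        exact finsetProd_diagonal d T
      rw [Finset.sum_congr rfl h1, diagonal_finset_sum, ← Matrix.diagonal_one] at hsum
      have h2 := congrFun (Matrix.diagonal_injective hsum) v
      simp only [hprod] at h2
      rw [Finset.sum_boole] at h2
      have h3 : (Finset.univ.powersetCard b).filter (· ⊆ φ v) = (φ v).powersetCard b := by
        ext T
        simp only [Finset.mem_filter, Finset.mem_powersetCard]
        constructor
        · rintro ⟨⟨-, a2⟩, a3⟩; exact ⟨a3, a2⟩
        · rintro ⟨a1, a2⟩; exact ⟨⟨Finset.subset_univ T, a2⟩, a1⟩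
      rw [h3, Finset.card_powersetCard] at h2
      have h4 : ((φ v).card.choose b : ℂ) = ((1 : ℕ) : ℂ) := by rw [h2, Nat.cast_one]
      exact choose_eq_one' hb (Nat.cast_injective h4)
    · intro v w hvw
      have hE : Matrix.single v w (1:ℂ) ∈ graphSpan G :=
        Submodule.subset_span ⟨v, w, hvw, rfl⟩
      have h0 := hedge _ hE
      rw [Finset.eq_empty_iff_forall_notMem]
      intro a ha
      obtain ⟨hav, haw⟩ := Finset.mem_inter.mp ha
      simp only [hφ, Finset.mem_filter] at hav haw
      have h1 := congrFun (congrFun (h0 a) v) w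
      rw [hPd a, Matrix.mul_diagonal, Matrix.diagonal_mul, Matrix.zero_apply,
        Matrix.single_apply_same, mul_one, hav.2, haw.2, one_mul] at h1
      exact one_ne_zero h1

theorem classical_bfold_eq_local_bfold {V : Type*} [Fintype V] [DecidableEq V]
    (G : SimpleGraph V) (b c : ℕ) (hb : 1 ≤ b) (hc : 1 ≤ c) :
    ((∃ φ : V → Finset (Fin c), (∀ v, (φ v).card = b) ∧
        ∀ v w, G.Adj v w → φ v ∩ φ w = ∅)
      ↔ HasLocalBFoldColoring (graphSpan G) {A : Matrix V V ℂ | A.IsDiag} b c)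
    ∧ localBChrom (graphSpan G) {A : Matrix V V ℂ | A.IsDiag} b
        = ⨅ (c' : ℕ) (_ : ∃ φ : V → Finset (Fin c'), (∀ v, (φ v).card = b) ∧
            ∀ v w, G.Adj v w → φ v ∩ φ w = ∅), (c' : ℕ∞) := by
  refine ⟨key_iff G b c hb, ?_⟩
  unfold localBChrom
  exact iInf_congr fun c' => by
    rw [show HasLocalBFoldColoring (graphSpan G) {A : Matrix V V ℂ | A.IsDiag} b c'
      = (∃ φ : V → Finset (Fin c'), (∀ v, (φ v).card = b) ∧
          ∀ v w, G.Adj v w → φ v ∩ φ w = ∅) from propext (key_iff G b c' hb).symm]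

end
end

section
/- Let (S, M) be a quantum graph on M_n(ℂ) and let b ≥ 2 and c ≥ 1. If (S, M) admits a quantum b-fold coloring using c colors, then (S, M) admits a quantum (b−1)-fold coloring using c−1 colors. Consequently, whenever χ_{b,q}(S, M) is finite, χ_{b−1,q}(S, M) < χ_{b,q}(S, M). -/
open Matrix Kronecker BigOperators

noncomputable section

section Key

variable {R : Type*} [CommRing R] {c : ℕ}

/-- minimal idempotents of the algebra generated by commuting idempotents -/
def fB (p : Fin (c + 1) → R) (B : Finset (Fin (c + 1))) : R :=
  ∏ a, if a ∈ B then p a else 1 - p a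

def qel (p : Fin (c + 1) → R) (a : Fin c) : R :=
  p a.castSucc * (1 - (1 - p (Fin.last c)) *
    ∏ x ∈ Finset.univ.filter (fun x => a.castSucc < x ∧ x ≠ Fin.last c), (1 - p x))

open scoped Classical in
def keepSet (B : Finset (Fin (c + 1))) : Finset (Fin c) :=
  Finset.univ.filter (fun a => a.castSucc ∈ B ∧
    ¬(Fin.last c ∉ B ∧ ∀ x ∈ Finset.univ.filter
        (fun x => a.castSucc < x ∧ x ≠ Fin.last c), x ∉ B))

variable {p : Fin (c + 1) → R} (hid : ∀ a, p a * p a = p a)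

include hid

lemma mul_fB (a : Fin (c + 1)) (B : Finset (Fin (c + 1))) :
    p a * fB p B = if a ∈ B then fB p B else 0 := by
  have h := Finset.mul_prod_erase Finset.univ
    (fun x => if x ∈ B then p x else 1 - p x) (Finset.mem_univ a)
  by_cases hm : a ∈ B
  · simp only [hm, if_true] at h ⊢
    show p a * fB p B = fB p B
    rw [fB, ← h, ← mul_assoc, hid a]
  · simp only [hm, if_false] at h ⊢
    show p a * fB p B = 0
    rw [fB, ← h, ← mul_assoc, mul_sub, mul_one, hid a, sub_self, zero_mul]

lemma one_sub_mul_fB (a : Fin (c + 1)) (B : Finset (Fin (c + 1))) :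
    (1 - p a) * fB p B = if a ∈ B then 0 else fB p B := by
  rw [sub_mul, one_mul, mul_fB hid]
  by_cases h : a ∈ B <;> simp [h]

lemma prod_mul_fB (T : Finset (Fin (c + 1))) (B : Finset (Fin (c + 1))) :
    (∏ a ∈ T, p a) * fB p B = if T ⊆ B then fB p B else 0 := by
  classical
  induction T using Finset.induction_on with
  | empty => simp
  | @insert a T0 ha ih =>
    rw [Finset.prod_insert ha, mul_assoc, ih]
    by_cases h0 : T0 ⊆ B
    · rw [if_pos h0, mul_fB hid]
      by_cases h1 : a ∈ B
      · simp [h1, Finset.insert_subset_iff, h0]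
      · simp [h1, Finset.insert_subset_iff]
    · simp [h0, Finset.insert_subset_iff]

lemma prod_one_sub_mul_fB (T : Finset (Fin (c + 1))) (B : Finset (Fin (c + 1))) :
    (∏ a ∈ T, (1 - p a)) * fB p B = if ∀ x ∈ T, x ∉ B then fB p B else 0 := by
  classical
  induction T using Finset.induction_on with
  | empty => simp
  | @insert a T0 ha ih =>
    rw [Finset.prod_insert ha, mul_assoc, ih]
    by_cases h0 : ∀ x ∈ T0, x ∉ B
    · rw [if_pos h0, one_sub_mul_fB hid]
      by_cases h1 : a ∈ B
      · have hno : ¬ ∀ x ∈ insert a T0, x ∉ B :=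
          fun h => (h a (Finset.mem_insert_self a T0)) h1
        rw [if_pos h1, if_neg hno]
      · have hyes : ∀ x ∈ insert a T0, x ∉ B := by
          intro x hx
          rcases Finset.mem_insert.1 hx with rfl | hx
          · exact h1
          · exact h0 x hx
        rw [if_neg h1, if_pos hyes]
    · have hno : ¬ ∀ x ∈ insert a T0, x ∉ B := by
        intro h; exact h0 fun x hx => h x (Finset.mem_insert_of_mem hx)
      rw [if_neg h0, mul_zero, if_neg hno]

omit hid in
lemma mem_keepSet {a : Fin c} {B : Finset (Fin (c + 1))} :
    a ∈ keepSet B ↔ a.castSucc ∈ B ∧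
      ¬(Fin.last c ∉ B ∧ ∀ x ∈ Finset.univ.filter
          (fun x => a.castSucc < x ∧ x ≠ Fin.last c), x ∉ B) := by
  classical
  simp [keepSet]

lemma qel_mul_fB (a : Fin c) (B : Finset (Fin (c + 1))) :
    qel p a * fB p B = if a ∈ keepSet B then fB p B else 0 := by
  classical
  set F := Finset.univ.filter (fun x => a.castSucc < x ∧ x ≠ Fin.last c) with hF
  have hs : ((1 - p (Fin.last c)) * ∏ x ∈ F, (1 - p x)) * fB p B
      = if (Fin.last c ∉ B ∧ ∀ x ∈ F, x ∉ B) then fB p B else 0 := by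
    rw [mul_assoc, prod_one_sub_mul_fB hid]
    by_cases h1 : ∀ x ∈ F, x ∉ B
    · rw [if_pos h1, one_sub_mul_fB hid]
      by_cases h2 : Fin.last c ∈ B
      · rw [if_pos h2, if_neg (fun h => h.1 h2)]
      · rw [if_neg h2, if_pos ⟨h2, h1⟩]
    · rw [if_neg h1, mul_zero, if_neg (fun h => h1 h.2)]
  have hmain : qel p a * fB p B =
      (if a.castSucc ∈ B then fB p B else 0)
      - p a.castSucc * (if (Fin.last c ∉ B ∧ ∀ x ∈ F, x ∉ B) then fB p B else 0) := by
    rw [qel, mul_assoc, sub_mul, one_mul, ← hF, hs, mul_sub, mul_fB hid]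
  rw [hmain]
  by_cases hm : a.castSucc ∈ B
  · by_cases hcond : (Fin.last c ∉ B ∧ ∀ x ∈ F, x ∉ B)
    · have hk : a ∉ keepSet B := by
        rw [mem_keepSet]
        push_neg
        intro _; exact hcond
      rw [if_pos hm, if_pos hcond, mul_fB hid, if_pos hm, if_neg hk, sub_self]
    · have hk : a ∈ keepSet B := mem_keepSet.2 ⟨hm, hcond⟩
      rw [if_pos hm, if_neg hcond, mul_zero, if_pos hk, sub_zero]
  · have hk : a ∉ keepSet B := by
      rw [mem_keepSet]; tauto
    rw [if_neg hm, if_neg hk]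
    by_cases hcond : (Fin.last c ∉ B ∧ ∀ x ∈ F, x ∉ B)
    · rw [if_pos hcond, mul_fB hid, if_neg hm, zero_sub, neg_zero]
    · rw [if_neg hcond, mul_zero, zero_sub, neg_zero]

lemma qprod_mul_fB (T : Finset (Fin c)) (B : Finset (Fin (c + 1))) :
    (∏ a ∈ T, qel p a) * fB p B = if T ⊆ keepSet B then fB p B else 0 := by
  classical
  induction T using Finset.induction_on with
  | empty => simp
  | @insert a T0 ha ih =>
    rw [Finset.prod_insert ha, mul_assoc, ih]
    by_cases h0 : T0 ⊆ keepSet B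
    · rw [if_pos h0, qel_mul_fB hid]
      by_cases h1 : a ∈ keepSet B
      · simp [h1, Finset.insert_subset_iff, h0]
      · simp [h1, Finset.insert_subset_iff]
    · simp [h0, Finset.insert_subset_iff]

omit hid in
lemma fB_eq (B : Finset (Fin (c + 1))) :
    fB p B = (∏ a ∈ B, p a) * ∏ a ∈ Finset.univ \ B, (1 - p a) := by
  classical
  rw [fB, ← Finset.prod_mul_prod_compl B, Finset.compl_eq_univ_sdiff]
  congr 1
  · exact Finset.prod_congr rfl fun x hx => if_pos hx
  · refine Finset.prod_congr rfl fun x hx => if_neg ?_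
    exact (Finset.mem_sdiff.1 hx).2

omit hid in
lemma sum_fB : ∑ B ∈ (Finset.univ : Finset (Fin (c + 1))).powerset, fB p B = 1 := by
  classical
  have h := Finset.prod_add p (fun a => 1 - p a) (Finset.univ : Finset (Fin (c + 1)))
  simp only [add_sub_cancel, Finset.prod_const_one] at h
  rw [eq_comm, h]
  exact Finset.sum_congr rfl fun B _ => (fB_eq B).symm

lemma fB_zero {b : ℕ} (hb : 1 ≤ b)
    (htf : ∀ m : ℕ, m ≠ 0 → ∀ x : R, m • x = 0 → x = 0)
    (H : ∑ T ∈ (Finset.univ : Finset (Fin (c + 1))).powersetCard b, ∏ a ∈ T, p a = 1)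
    (B : Finset (Fin (c + 1))) (hB : B.card ≠ b) : fB p B = 0 := by
  classical
  have h1 : (∑ T ∈ (Finset.univ : Finset (Fin (c + 1))).powersetCard b, ∏ a ∈ T, p a)
      * fB p B = fB p B := by rw [H, one_mul]
  rw [Finset.sum_mul, Finset.sum_congr rfl
    (fun T _ => prod_mul_fB hid T B), ← Finset.sum_filter, Finset.sum_const] at h1
  have hfil : ((Finset.univ : Finset (Fin (c + 1))).powersetCard b).filter (· ⊆ B)
      = B.powersetCard b := by
    ext T
    simp only [Finset.mem_filter, Finset.mem_powersetCard]
    constructor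
    · rintro ⟨⟨-, h2⟩, h3⟩; exact ⟨h3, h2⟩
    · rintro ⟨h2, h3⟩; exact ⟨⟨Finset.subset_univ T, h3⟩, h2⟩
  rw [hfil, Finset.card_powersetCard] at h1
  rcases lt_or_ge B.card b with hlt | hle
  · rw [Nat.choose_eq_zero_of_lt hlt] at h1
    simpa using h1.symm
  · have hgt : b < B.card := lt_of_le_of_ne hle (fun h => hB h.symm)
    set N := B.card.choose b with hN
    have hN2 : 2 ≤ N := by
      calc 2 ≤ b + 1 := by omega
      _ = (b + 1).choose b := (Nat.choose_succ_self_right b).symm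
      _ ≤ B.card.choose b := Nat.choose_le_choose b hgt
    have h3 : (N - 1 + 1) • fB p B = fB p B := by
      rw [Nat.sub_add_cancel (by omega)]; exact h1
    rw [succ_nsmul] at h3
    have h4 : (N - 1) • fB p B = 0 := by
      have := congrArg (fun z => z - fB p B) h3
      simpa using this
    exact htf (N - 1) (by omega) _ h4

omit hid in
lemma card_filter_castSucc (D : Finset (Fin (c + 1))) (hD : Fin.last c ∉ D) :
    (Finset.univ.filter (fun a : Fin c => a.castSucc ∈ D)).card = D.card := by
  classical
  apply Finset.card_nbij (fun a => a.castSucc)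
  · intro a ha
    exact (Finset.mem_filter.1 ha).2
  · intro a _ a' _ h
    exact Fin.castSucc_injective c h
  · intro x hx
    have hxne : x ≠ Fin.last c := fun h => hD (h ▸ hx)
    obtain ⟨y, rfl⟩ := Fin.exists_castSucc_eq.mpr hxne
    exact ⟨y, by simpa using hx, rfl⟩

omit hid in
lemma keepSet_card {b : ℕ} (hb : 1 ≤ b) (B : Finset (Fin (c + 1))) (hB : B.card = b) :
    (keepSet B).card = b - 1 := by
  classical
  have hlastne : ∀ a : Fin c, a.castSucc ≠ Fin.last c :=
    fun a => (Fin.castSucc_lt_last a).ne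
  by_cases hl : Fin.last c ∈ B
  · have hset : keepSet B
        = Finset.univ.filter (fun a : Fin c => a.castSucc ∈ B.erase (Fin.last c)) := by
      ext a
      rw [mem_keepSet, Finset.mem_filter]
      simp only [Finset.mem_univ, true_and, Finset.mem_erase]
      constructor
      · rintro ⟨h1, -⟩; exact ⟨hlastne a, h1⟩
      · rintro ⟨-, h1⟩
        refine ⟨h1, ?_⟩
        rintro ⟨h2, -⟩; exact h2 hl
    rw [hset, card_filter_castSucc _ (Finset.notMem_erase _ _),
      Finset.card_erase_of_mem hl, hB]
  · have hne : B.Nonempty := Finset.card_pos.1 (by omega)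
    set m := B.max' hne with hm
    have hmB : m ∈ B := B.max'_mem hne
    have hmne : m ≠ Fin.last c := fun h => hl (h ▸ hmB)
    have hset : keepSet B
        = Finset.univ.filter (fun a : Fin c => a.castSucc ∈ B.erase m) := by
      ext a
      rw [mem_keepSet, Finset.mem_filter]
      simp only [Finset.mem_univ, true_and, Finset.mem_erase]
      constructor
      · rintro ⟨h1, h2⟩
        push_neg at h2
        obtain ⟨x, hx1, hx2⟩ := h2 hl
        rw [Finset.mem_filter] at hx1
        refine ⟨?_, h1⟩
        have : a.castSucc < m := lt_of_lt_of_le hx1.2.1 (B.le_max' x hx2)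
        exact this.ne
      · rintro ⟨h1, h2⟩
        refine ⟨h2, ?_⟩
        rintro ⟨-, h3⟩
        refine h3 m ?_ hmB
        rw [Finset.mem_filter]
        exact ⟨Finset.mem_univ m, lt_of_le_of_ne (B.le_max' _ h2) h1, hmne⟩
    rw [hset, card_filter_castSucc _ (fun h => hl (Finset.mem_of_mem_erase h)),
      Finset.card_erase_of_mem hmB, hB]

lemma qel_idem (a : Fin c) : qel p a * qel p a = qel p a := by
  classical
  have hone : ∀ x, (1 - p x) * (1 - p x) = 1 - p x := fun x => by
    linear_combination hid x
  set s := (1 - p (Fin.last c)) *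
    ∏ x ∈ Finset.univ.filter (fun x => a.castSucc < x ∧ x ≠ Fin.last c), (1 - p x) with hsdef
  have hss : s * s = s := by
    rw [hsdef, mul_mul_mul_comm, hone, ← Finset.prod_mul_distrib]
    congr 1
    exact Finset.prod_congr rfl fun x _ => hone x
  show p a.castSucc * (1 - s) * (p a.castSucc * (1 - s)) = p a.castSucc * (1 - s)
  linear_combination ((1 - s)^2) * hid a.castSucc + p a.castSucc * hss

theorem key {b : ℕ} (hb : 1 ≤ b)
    (htf : ∀ m : ℕ, m ≠ 0 → ∀ x : R, m • x = 0 → x = 0)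
    (H : ∑ T ∈ (Finset.univ : Finset (Fin (c + 1))).powersetCard b, ∏ a ∈ T, p a = 1) :
    ∑ T ∈ (Finset.univ : Finset (Fin c)).powersetCard (b - 1), ∏ a ∈ T, qel p a = 1 := by
  classical
  set X := ∑ T ∈ (Finset.univ : Finset (Fin c)).powersetCard (b - 1), ∏ a ∈ T, qel p a with hX
  have h1 : ∀ B : Finset (Fin (c + 1)), X * fB p B = fB p B := by
    intro B
    rw [hX, Finset.sum_mul, Finset.sum_congr rfl (fun T _ => qprod_mul_fB hid T B),
      ← Finset.sum_filter, Finset.sum_const]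
    by_cases hB : B.card = b
    · have hk := keepSet_card hb B hB
      have hfil : ((Finset.univ : Finset (Fin c)).powersetCard (b - 1)).filter
          (· ⊆ keepSet B) = (keepSet B).powersetCard (b - 1) := by
        ext T
        simp only [Finset.mem_filter, Finset.mem_powersetCard]
        constructor
        · rintro ⟨⟨-, h2⟩, h3⟩; exact ⟨h3, h2⟩
        · rintro ⟨h2, h3⟩; exact ⟨⟨Finset.subset_univ T, h3⟩, h2⟩
      rw [hfil, Finset.card_powersetCard, hk, Nat.choose_self, one_smul]
    · rw [fB_zero hid hb htf H B hB, smul_zero]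
  calc X = X * 1 := (mul_one X).symm
    _ = X * ∑ B ∈ (Finset.univ : Finset (Fin (c + 1))).powerset, fB p B := by rw [sum_fB]
    _ = ∑ B ∈ (Finset.univ : Finset (Fin (c + 1))).powerset, X * fB p B := Finset.mul_sum _ _ _
    _ = ∑ B ∈ (Finset.univ : Finset (Fin (c + 1))).powerset, fB p B :=
        Finset.sum_congr rfl fun B _ => h1 B
    _ = 1 := sum_fB

end Key

section MatrixSide

variable {I J : Type*} [Fintype I] [Fintype J] [DecidableEq I] [DecidableEq J]

lemma kron_conjTranspose (A : Matrix I I ℂ) (B : Matrix J J ℂ) :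
    (A ⊗ₖ B)ᴴ = Aᴴ ⊗ₖ Bᴴ := by
  ext ⟨i, j⟩ ⟨i', j'⟩
  simp [Matrix.conjTranspose_apply, Matrix.kroneckerMap_apply, mul_comm]

lemma tensorSpan_one {M : Set (Matrix I I ℂ)} (hM : (1 : Matrix I I ℂ) ∈ M) :
    (1 : Matrix (I × J) (I × J) ℂ) ∈ tensorSpan M (Set.univ : Set (Matrix J J ℂ)) :=
  Submodule.subset_span ⟨1, hM, 1, Set.mem_univ _, (Matrix.one_kronecker_one).symm⟩

lemma tensorSpan_mul {M : Set (Matrix I I ℂ)}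
    (hM : ∀ v ∈ M, ∀ w ∈ M, v * w ∈ M) :
    ∀ x y : Matrix (I × J) (I × J) ℂ, x ∈ tensorSpan M (Set.univ : Set (Matrix J J ℂ)) →
      y ∈ tensorSpan M (Set.univ : Set (Matrix J J ℂ)) →
        x * y ∈ tensorSpan M (Set.univ : Set (Matrix J J ℂ)) := by
  intro x y hx
  revert y
  induction hx using Submodule.span_induction with
  | mem x hgen =>
    intro y hy
    induction hy using Submodule.span_induction with
    | mem y hgen' =>
      obtain ⟨v, hv, w, -, rfl⟩ := hgen
      obtain ⟨v', hv', w', -, rfl⟩ := hgen'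
      rw [← Matrix.mul_kronecker_mul]
      exact Submodule.subset_span ⟨v * v', hM v hv v' hv', w * w', Set.mem_univ _, rfl⟩
    | zero => rw [mul_zero]; exact Submodule.zero_mem _
    | add y z _ _ ihy ihz => rw [mul_add]; exact Submodule.add_mem _ ihy ihz
    | smul r y _ ihy => rw [Matrix.mul_smul]; exact Submodule.smul_mem _ _ ihy
  | zero => intro y _; rw [zero_mul]; exact Submodule.zero_mem _
  | add x z _ _ ihx ihz => intro y hy; rw [add_mul]; exact Submodule.add_mem _ (ihx y hy) (ihz y hy)
  | smul r x _ ihx => intro y hy; rw [Matrix.smul_mul]; exact Submodule.smul_mem _ _ (ihx y hy)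

lemma tensorSpan_star {M : Set (Matrix I I ℂ)}
    (hM : ∀ v ∈ M, vᴴ ∈ M) :
    ∀ x ∈ tensorSpan M (Set.univ : Set (Matrix J J ℂ)),
      star x ∈ tensorSpan M (Set.univ : Set (Matrix J J ℂ)) := by
  intro x hx
  induction hx using Submodule.span_induction with
  | mem x hgen =>
    obtain ⟨v, hv, w, -, rfl⟩ := hgen
    rw [Matrix.star_eq_conjTranspose, kron_conjTranspose]
    exact Submodule.subset_span ⟨vᴴ, hM v hv, wᴴ, Set.mem_univ _, rfl⟩
  | zero => rw [star_zero]; exact Submodule.zero_mem _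
  | add x y _ _ ihx ihy => rw [star_add]; exact Submodule.add_mem _ ihx ihy
  | smul r x _ ihx =>
    rw [star_smul]
    exact Submodule.smul_mem _ _ ihx

end MatrixSide

set_option maxHeartbeats 1000000 in
theorem construct_step {n : ℕ} (hn : 1 ≤ n)
    (S : Submodule ℂ (Matrix (Fin n) (Fin n) ℂ))
    (M : StarSubalgebra ℂ (Matrix (Fin n) (Fin n) ℂ))
    {b c : ℕ} (hb : 2 ≤ b) (hc : 1 ≤ c)
    (h : HasQBFoldColoring S (M : Set (Matrix (Fin n) (Fin n) ℂ)) b c) :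
    HasQBFoldColoring S (M : Set (Matrix (Fin n) (Fin n) ℂ)) (b - 1) (c - 1) := by
  classical
  obtain ⟨k, hk, P, hmem, hcommP, hstarP, hidemP, hsumP, hzeroP⟩ := h
  obtain ⟨c', rfl⟩ : ∃ c', c = c' + 1 := ⟨c - 1, by omega⟩
  obtain ⟨b', rfl⟩ : ∃ b', b = b' + 1 := ⟨b - 1, by omega⟩
  simp only [Nat.add_sub_cancel]
  have hcomm' : ∀ x ∈ Set.range P, ∀ y ∈ Set.range P, x * y = y * x := by
    rintro x ⟨a, rfl⟩ y ⟨a', rfl⟩; exact hcommP a a'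
  have hcommstar' : ∀ x ∈ Set.range P, ∀ y ∈ Set.range P, x * star y = star y * x := by
    rintro x hx y ⟨a', rfl⟩
    rw [Matrix.star_eq_conjTranspose, hstarP a']
    exact hcomm' x hx _ ⟨a', rfl⟩
  letI : CommRing (StarAlgebra.adjoin ℝ (Set.range P)) :=
    StarAlgebra.adjoinCommRingOfComm ℝ hcomm' hcommstar'
  let p : Fin (c' + 1) → (StarAlgebra.adjoin ℝ (Set.range P)) :=
    fun a => ⟨P a, StarAlgebra.subset_adjoin ℝ (Set.range P) (Set.mem_range_self a)⟩
  have hidem' : ∀ a, p a * p a = p a := fun a => Subtype.ext (hidemP a)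
  -- coercion of finset sums
  have hcoe_sum : ∀ {m : ℕ} (s : Finset (Finset (Fin m)))
      (f : Finset (Fin m) → (StarAlgebra.adjoin ℝ (Set.range P))),
      Subtype.val (∑ i ∈ s, f i) = ∑ i ∈ s, Subtype.val (f i) := by
    intro m s f
    induction s using Finset.induction_on with
    | empty => rfl
    | @insert a s0 ha ih => rw [Finset.sum_insert ha, Finset.sum_insert ha, ← ih]; rfl
  have hlist : ∀ {m : ℕ} (g : Fin m → (StarAlgebra.adjoin ℝ (Set.range P)))
      (l : List (Fin m)),
      (l.map (fun a => Subtype.val (g a))).prod = Subtype.val (l.map g).prod := by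
    intro m g l
    induction l with
    | nil => rfl
    | cons x l ih =>
      rw [List.map_cons, List.prod_cons, List.map_cons, List.prod_cons, ih]; rfl
  have hfp : ∀ {m : ℕ} (g : Fin m → (StarAlgebra.adjoin ℝ (Set.range P)))
      (T : Finset (Fin m)),
      finsetProd (fun a => Subtype.val (g a)) T = Subtype.val (∏ a ∈ T, g a) := by
    intro m g T
    rw [finsetProd, hlist]
    congr 2
    rw [Finset.prod_eq_multiset_prod, ← Finset.sort_eq T (· ≤ ·), Multiset.map_coe,
      Multiset.prod_coe]
  -- transfer the sum hypothesis into the subalgebra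
  have hsum' : ∑ T ∈ (Finset.univ : Finset (Fin (c' + 1))).powersetCard (b' + 1),
      ∏ a ∈ T, p a = 1 := by
    apply Subtype.ext
    rw [hcoe_sum]
    rw [show (∑ T ∈ (Finset.univ : Finset (Fin (c' + 1))).powersetCard (b' + 1),
        Subtype.val (∏ a ∈ T, p a))
      = ∑ T ∈ (Finset.univ : Finset (Fin (c' + 1))).powersetCard (b' + 1), finsetProd P T
      from Finset.sum_congr rfl fun T _ => (hfp p T).symm]
    exact hsumP
  -- torsion-freeness
  have htf : ∀ m : ℕ, m ≠ 0 → ∀ x : (StarAlgebra.adjoin ℝ (Set.range P)),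
      m • x = 0 → x = 0 := by
    intro m hm x hx
    apply Subtype.ext
    have hval : ∀ (j : ℕ) (y : (StarAlgebra.adjoin ℝ (Set.range P))),
        Subtype.val (j • y) = j • Subtype.val y := by
      intro j y
      induction j with
      | zero => rw [zero_nsmul, zero_nsmul]; rfl
      | succ j ih => rw [succ_nsmul, succ_nsmul, ← ih]; rfl
    have h1 : m • Subtype.val x = (0 : Matrix (Fin n × Fin k) (Fin n × Fin k) ℂ) := by
      rw [← hval]; exact congrArg Subtype.val hx
    rw [← Nat.cast_smul_eq_nsmul ℂ m] at h1
    have hmne : ((m : ℂ)) ≠ 0 := Nat.cast_ne_zero.2 hm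
    have h4 := congrArg (fun z => ((m : ℂ))⁻¹ • z) h1
    simpa [smul_smul, inv_mul_cancel₀ hmne] using h4
  -- apply the key combinatorial lemma
  have hq := key (p := p) (b := b' + 1) hidem' (Nat.succ_le_succ (Nat.zero_le b')) htf hsum'
  simp only [Nat.add_sub_cancel] at hq
  -- the new projections
  refine ⟨k, hk, fun a => Subtype.val (qel p a), ?_, ?_, ?_, ?_, ?_, ?_⟩
  · -- membership in tensorSpan
    intro a
    have honeM : (1 : Matrix (Fin n) (Fin n) ℂ) ∈ (M : Set (Matrix (Fin n) (Fin n) ℂ)) :=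
      M.one_mem
    have hmulM : ∀ v ∈ (M : Set (Matrix (Fin n) (Fin n) ℂ)),
        ∀ w ∈ (M : Set (Matrix (Fin n) (Fin n) ℂ)),
          v * w ∈ (M : Set (Matrix (Fin n) (Fin n) ℂ)) := fun v hv w hw => M.mul_mem hv hw
    have hstarM : ∀ v ∈ (M : Set (Matrix (Fin n) (Fin n) ℂ)),
        vᴴ ∈ (M : Set (Matrix (Fin n) (Fin n) ℂ)) := fun v hv => by
      rw [← Matrix.star_eq_conjTranspose]; exact star_mem hv
    let Tsub : StarSubalgebra ℝ (Matrix (Fin n × Fin k) (Fin n × Fin k) ℂ) :=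
      { toSubalgebra := ((tensorSpan (M : Set (Matrix (Fin n) (Fin n) ℂ))
            (Set.univ : Set (Matrix (Fin k) (Fin k) ℂ))).toSubalgebra
          (tensorSpan_one honeM) (tensorSpan_mul hmulM)).restrictScalars ℝ
        star_mem' := fun hx => tensorSpan_star hstarM _ hx }
    have hle : StarAlgebra.adjoin ℝ (Set.range P) ≤ Tsub := by
      apply StarAlgebra.adjoin_le
      rintro x ⟨a', rfl⟩
      exact hmem a'
    exact hle (qel p a).2
  · -- pairwise commuting
    intro a a'
    exact congrArg Subtype.val (mul_comm (qel p a) (qel p a'))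
  · -- self-adjoint
    intro a
    have hsa : ∀ x : Matrix (Fin n × Fin k) (Fin n × Fin k) ℂ,
        ∀ hx : x ∈ StarAlgebra.adjoin ℝ (Set.range P), star x = x := by
      intro x hx
      induction hx using StarAlgebra.adjoin_induction with
      | mem y hy =>
        obtain ⟨a', rfl⟩ := hy
        rw [Matrix.star_eq_conjTranspose]
        exact hstarP a'
      | algebraMap r => rw [← algebraMap_star_comm, star_trivial]
      | add y z hy hz ihy ihz => rw [star_add, ihy, ihz]
      | mul y z hy hz ihy ihz =>
        rw [Matrix.star_mul, ihy, ihz]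
        exact congrArg Subtype.val (mul_comm (⟨z, hz⟩ : StarAlgebra.adjoin ℝ (Set.range P))
          ⟨y, hy⟩)
      | star y hy ih => rw [star_star]; exact ih.symm
    rw [← Matrix.star_eq_conjTranspose]
    exact hsa _ (qel p a).2
  · -- idempotent
    intro a
    exact congrArg Subtype.val (qel_idem hidem' a)
  · -- the (b-1)-fold sum condition
    rw [show (∑ T ∈ (Finset.univ : Finset (Fin c')).powersetCard b',
        finsetProd (fun a => Subtype.val (qel p a)) T)
      = ∑ T ∈ (Finset.univ : Finset (Fin c')).powersetCard b',
          Subtype.val (∏ a ∈ T, qel p a)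
      from Finset.sum_congr rfl fun T _ => hfp (fun a => qel p a) T]
    rw [← hcoe_sum, hq]
    rfl
  · -- the zero condition
    intro X hX a
    have h0 := hzeroP X hX a.castSucc
    have hbeta : ∀ a' : Fin c', (fun a'' => Subtype.val (qel p a'')) a'
        = Subtype.val (qel p a') := fun _ => rfl
    rw [hbeta]
    obtain ⟨u, hQ1, hQ2⟩ : ∃ u : StarAlgebra.adjoin ℝ (Set.range P),
        Subtype.val (qel p a) = P a.castSucc * Subtype.val u ∧
          Subtype.val u * P a.castSucc = P a.castSucc * Subtype.val u :=
      ⟨1 - (1 - p (Fin.last c')) *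
          ∏ x ∈ Finset.univ.filter (fun x => a.castSucc < x ∧ x ≠ Fin.last c'), (1 - p x),
        rfl, congrArg Subtype.val (mul_comm _ (p a.castSucc))⟩
    rw [hQ1]
    nth_rewrite 1 [← hQ2]
    calc Subtype.val u * P a.castSucc * (X ⊗ₖ (1 : Matrix (Fin k) (Fin k) ℂ))
          * (P a.castSucc * Subtype.val u)
        = Subtype.val u * (P a.castSucc * (X ⊗ₖ (1 : Matrix (Fin k) (Fin k) ℂ))
            * P a.castSucc) * Subtype.val u := by
          simp only [mul_assoc]
      _ = 0 := by rw [h0, mul_zero, zero_mul]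

theorem qbChrom_pred {n : ℕ} (hn : 1 ≤ n)
    (S : Submodule ℂ (Matrix (Fin n) (Fin n) ℂ))
    (M : StarSubalgebra ℂ (Matrix (Fin n) (Fin n) ℂ))
    (hQG : IsQuantumGraph S (M : Set (Matrix (Fin n) (Fin n) ℂ)))
    (b : ℕ) (hb : 2 ≤ b) :
    (∀ c : ℕ, 1 ≤ c →
      HasQBFoldColoring S (M : Set (Matrix (Fin n) (Fin n) ℂ)) b c →
        HasQBFoldColoring S (M : Set (Matrix (Fin n) (Fin n) ℂ)) (b - 1) (c - 1))
    ∧ (qbChrom S (M : Set (Matrix (Fin n) (Fin n) ℂ)) b ≠ ⊤ →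
        qbChrom S (M : Set (Matrix (Fin n) (Fin n) ℂ)) (b - 1)
          < qbChrom S (M : Set (Matrix (Fin n) (Fin n) ℂ)) b) := by
  classical
  have main : ∀ c : ℕ, 1 ≤ c →
      HasQBFoldColoring S (M : Set (Matrix (Fin n) (Fin n) ℂ)) b c →
        HasQBFoldColoring S (M : Set (Matrix (Fin n) (Fin n) ℂ)) (b - 1) (c - 1) :=
    fun c hc h => construct_step hn S M hb hc h
  refine ⟨main, ?_⟩
  intro hfin
  have hex : ∃ c : ℕ, HasQBFoldColoring S (M : Set (Matrix (Fin n) (Fin n) ℂ)) b c := by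
    by_contra hno
    push_neg at hno
    apply hfin
    unfold qbChrom
    rw [iInf_eq_top]
    intro c
    rw [iInf_eq_top]
    intro h
    exact absurd h (hno c)
  have hc₀spec : HasQBFoldColoring S (M : Set (Matrix (Fin n) (Fin n) ℂ)) b (Nat.find hex) :=
    Nat.find_spec hex
  have hpos : 1 ≤ Nat.find hex := by
    by_contra h
    push_neg at h
    have h0 : Nat.find hex = 0 := by omega
    rw [h0] at hc₀spec
    obtain ⟨k, hk, P, hP⟩ := hc₀spec
    have hsum := hP.2.2.2.2.1
    have hempty : ((Finset.univ : Finset (Fin 0)).powersetCard b) = ∅ := by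
      apply Finset.eq_empty_of_forall_notMem
      intro T hT
      rw [Finset.mem_powersetCard] at hT
      have h1 : T.card ≤ 0 := by
        calc T.card ≤ (Finset.univ : Finset (Fin 0)).card := Finset.card_le_card hT.1
        _ = 0 := by simp
      omega
    rw [hempty, Finset.sum_empty] at hsum
    have hzo := congrFun (congrFun hsum (⟨0, by omega⟩, ⟨0, by omega⟩))
      (⟨0, by omega⟩, ⟨0, by omega⟩)
    rw [Matrix.zero_apply, Matrix.one_apply_eq] at hzo
    exact zero_ne_one hzo
  have hval : qbChrom S (M : Set (Matrix (Fin n) (Fin n) ℂ)) b = ((Nat.find hex : ℕ) : ℕ∞) := by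
    apply le_antisymm
    · exact iInf_le_of_le (Nat.find hex) (iInf_le_of_le hc₀spec le_rfl)
    · refine le_iInf fun c => le_iInf fun hcol => ?_
      exact_mod_cast Nat.find_min' hex hcol
  have hstep := main _ hpos hc₀spec
  have hupper : qbChrom S (M : Set (Matrix (Fin n) (Fin n) ℂ)) (b - 1)
      ≤ ((Nat.find hex - 1 : ℕ) : ℕ∞) :=
    iInf_le_of_le _ (iInf_le_of_le hstep le_rfl)
  calc qbChrom S (M : Set (Matrix (Fin n) (Fin n) ℂ)) (b - 1)
      ≤ ((Nat.find hex - 1 : ℕ) : ℕ∞) := hupper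
    _ < ((Nat.find hex : ℕ) : ℕ∞) := by exact_mod_cast Nat.sub_lt hpos one_pos
    _ = qbChrom S (M : Set (Matrix (Fin n) (Fin n) ℂ)) b := hval.symm

end
end

section
/- (Hedetniemi-type bound) Let (S_G, M_G) be a quantum graph on M_n(ℂ) and (S_H, M_H) a quantum graph on M_m(ℂ), and let their categorical product be the quantum graph (S_K, M_K) on M_{nm}(ℂ) with M_K = M_G ⊗ M_H and S_K = S_G ⊗ S_H. Then χ_q(S_K, M_K) ≤ min{χ_q(S_G, M_G), χ_q(S_H, M_H)}; equivalently, every quantum c-coloring of either factor yields a quantum c-coloring of the categorical product. -/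
open Matrix Kronecker BigOperators

noncomputable section

-- helper equivalences
def auxEquivL (I J K : Type*) : (I × J) × K ≃ (I × K) × J :=
  ⟨fun p => ((p.1.1, p.2), p.1.2), fun p => ((p.1.1, p.2), p.1.2), fun _ => rfl, fun _ => rfl⟩

def auxEquivR (I J K : Type*) : (I × J) × K ≃ (J × K) × I :=
  ⟨fun p => ((p.1.2, p.2), p.1.1), fun q => ((q.2, q.1.1), q.1.2), fun _ => rfl, fun _ => rfl⟩

lemma kron_conjT_s17 {I J : Type*} (A : Matrix I I ℂ) (B : Matrix J J ℂ) :
    (A ⊗ₖ B)ᴴ = Aᴴ ⊗ₖ Bᴴ := by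
  ext ⟨i, j⟩ ⟨i', j'⟩
  simp [Matrix.conjTranspose_apply, Matrix.kroneckerMap_apply, star_mul', mul_comm]

lemma transfer_left {I J : Type*} [Fintype I] [Fintype J] [DecidableEq I] [DecidableEq J]
    {c k : ℕ}
    (S : Submodule ℂ (Matrix I I ℂ)) (M : Set (Matrix I I ℂ))
    (S' : Set (Matrix J J ℂ)) (M' : Set (Matrix J J ℂ))
    (h1 : (1 : Matrix J J ℂ) ∈ M')
    (P : Fin c → Matrix (I × Fin k) (I × Fin k) ℂ)
    (hP : IsQColoring S M P) :
    IsQColoring (tensorSpan (S : Set (Matrix I I ℂ)) S')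
      ((tensorSpan M M' : Submodule ℂ (Matrix (I × J) (I × J) ℂ)) :
        Set (Matrix (I × J) (I × J) ℂ))
      (fun a => ((P a) ⊗ₖ (1 : Matrix J J ℂ)).submatrix (auxEquivL I J (Fin k))
        (auxEquivL I J (Fin k))) := by
  obtain ⟨hmem, hherm, hidem, hsum, hedge⟩ := hP
  set e := auxEquivL I J (Fin k) with he
  refine ⟨?_, ?_, ?_, ?_, ?_⟩
  · -- membership
    intro a
    have h := hmem a
    simp only [tensorSpan] at h ⊢
    refine Submodule.span_induction ?_ ?_ ?_ ?_ h
    · rintro x ⟨v, hv, w, -, rfl⟩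
      have key : ((v ⊗ₖ w) ⊗ₖ (1 : Matrix J J ℂ)).submatrix ⇑e ⇑e
          = (v ⊗ₖ (1 : Matrix J J ℂ)) ⊗ₖ w := by
        ext ⟨⟨i, j⟩, s⟩ ⟨⟨i', j'⟩, s'⟩
        simp [he, auxEquivL, Matrix.submatrix_apply, Matrix.kroneckerMap_apply,
          Matrix.one_apply]
      rw [key]
      exact Submodule.subset_span ⟨v ⊗ₖ (1 : Matrix J J ℂ),
        Submodule.subset_span ⟨v, hv, 1, h1, rfl⟩, w, trivial, rfl⟩
    · simp
    · intro x y hx hy ihx ihy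
      have : ((x + y) ⊗ₖ (1 : Matrix J J ℂ)).submatrix ⇑e ⇑e
          = (x ⊗ₖ (1 : Matrix J J ℂ)).submatrix ⇑e ⇑e
            + (y ⊗ₖ (1 : Matrix J J ℂ)).submatrix ⇑e ⇑e := by
        rw [Matrix.add_kronecker]; ext p q; simp [Matrix.submatrix_apply]
      rw [this]; exact add_mem ihx ihy
    · intro r x hx ihx
      have : ((r • x) ⊗ₖ (1 : Matrix J J ℂ)).submatrix ⇑e ⇑e
          = r • (x ⊗ₖ (1 : Matrix J J ℂ)).submatrix ⇑e ⇑e := by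
        rw [Matrix.smul_kronecker]; ext p q; simp [Matrix.submatrix_apply]
      rw [this]; exact Submodule.smul_mem _ r ihx
  · -- hermitian
    intro a
    rw [Matrix.conjTranspose_submatrix, kron_conjT_s17, hherm, Matrix.conjTranspose_one]
  · -- idempotent
    intro a
    rw [Matrix.submatrix_mul_equiv, ← Matrix.mul_kronecker_mul, hidem, one_mul]
  · -- sum
    have : (∑ a, ((P a) ⊗ₖ (1 : Matrix J J ℂ)).submatrix ⇑e ⇑e)
        = ((∑ a, P a) ⊗ₖ (1 : Matrix J J ℂ)).submatrix ⇑e ⇑e := by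
      ext p q
      simp [Matrix.sum_apply, Matrix.submatrix_apply, Matrix.kroneckerMap_apply,
        Finset.sum_mul]
    rw [this, hsum, Matrix.one_kronecker_one, Matrix.submatrix_one_equiv]
  · -- edges
    intro X hX a
    simp only [tensorSpan] at hX
    refine Submodule.span_induction ?_ ?_ ?_ ?_ hX
    · rintro x ⟨u, hu, v, hv, rfl⟩
      have key : (u ⊗ₖ v) ⊗ₖ (1 : Matrix (Fin k) (Fin k) ℂ)
          = ((u ⊗ₖ (1 : Matrix (Fin k) (Fin k) ℂ)) ⊗ₖ v).submatrix ⇑e ⇑e := by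
        ext ⟨⟨i, j⟩, s⟩ ⟨⟨i', j'⟩, s'⟩
        simp [he, auxEquivL, Matrix.submatrix_apply, Matrix.kroneckerMap_apply,
          Matrix.one_apply]
      rw [key, Matrix.submatrix_mul_equiv, Matrix.submatrix_mul_equiv,
        ← Matrix.mul_kronecker_mul, ← Matrix.mul_kronecker_mul,
        hedge u hu a, Matrix.zero_kronecker]
      ext p q; simp
    · simp
    · intro x y hx hy ihx ihy
      rw [Matrix.add_kronecker, Matrix.mul_add, Matrix.add_mul, ihx, ihy, add_zero]
    · intro r x hx ihx
      rw [Matrix.smul_kronecker, Matrix.mul_smul, Matrix.smul_mul, ihx, smul_zero]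

lemma transfer_right {I J : Type*} [Fintype I] [Fintype J] [DecidableEq I] [DecidableEq J]
    {c k : ℕ}
    (S : Set (Matrix I I ℂ)) (M : Set (Matrix I I ℂ))
    (S' : Submodule ℂ (Matrix J J ℂ)) (M' : Set (Matrix J J ℂ))
    (h1 : (1 : Matrix I I ℂ) ∈ M)
    (P : Fin c → Matrix (J × Fin k) (J × Fin k) ℂ)
    (hP : IsQColoring S' M' P) :
    IsQColoring (tensorSpan S (S' : Set (Matrix J J ℂ)))
      ((tensorSpan M M' : Submodule ℂ (Matrix (I × J) (I × J) ℂ)) :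
        Set (Matrix (I × J) (I × J) ℂ))
      (fun a => ((P a) ⊗ₖ (1 : Matrix I I ℂ)).submatrix (auxEquivR I J (Fin k))
        (auxEquivR I J (Fin k))) := by
  obtain ⟨hmem, hherm, hidem, hsum, hedge⟩ := hP
  set e := auxEquivR I J (Fin k) with he
  refine ⟨?_, ?_, ?_, ?_, ?_⟩
  · -- membership
    intro a
    have h := hmem a
    simp only [tensorSpan] at h ⊢
    refine Submodule.span_induction ?_ ?_ ?_ ?_ h
    · rintro x ⟨v, hv, w, -, rfl⟩
      have key : ((v ⊗ₖ w) ⊗ₖ (1 : Matrix I I ℂ)).submatrix ⇑e ⇑e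
          = ((1 : Matrix I I ℂ) ⊗ₖ v) ⊗ₖ w := by
        ext ⟨⟨i, j⟩, s⟩ ⟨⟨i', j'⟩, s'⟩
        simp [he, auxEquivR, Matrix.submatrix_apply, Matrix.kroneckerMap_apply,
          Matrix.one_apply]
      rw [key]
      exact Submodule.subset_span ⟨(1 : Matrix I I ℂ) ⊗ₖ v,
        Submodule.subset_span ⟨1, h1, v, hv, rfl⟩, w, trivial, rfl⟩
    · simp
    · intro x y hx hy ihx ihy
      have : ((x + y) ⊗ₖ (1 : Matrix I I ℂ)).submatrix ⇑e ⇑e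
          = (x ⊗ₖ (1 : Matrix I I ℂ)).submatrix ⇑e ⇑e
            + (y ⊗ₖ (1 : Matrix I I ℂ)).submatrix ⇑e ⇑e := by
        rw [Matrix.add_kronecker]; ext p q; simp [Matrix.submatrix_apply]
      rw [this]; exact add_mem ihx ihy
    · intro r x hx ihx
      have : ((r • x) ⊗ₖ (1 : Matrix I I ℂ)).submatrix ⇑e ⇑e
          = r • (x ⊗ₖ (1 : Matrix I I ℂ)).submatrix ⇑e ⇑e := by
        rw [Matrix.smul_kronecker]; ext p q; simp [Matrix.submatrix_apply]
      rw [this]; exact Submodule.smul_mem _ r ihx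
  · -- hermitian
    intro a
    rw [Matrix.conjTranspose_submatrix, kron_conjT_s17, hherm, Matrix.conjTranspose_one]
  · -- idempotent
    intro a
    rw [Matrix.submatrix_mul_equiv, ← Matrix.mul_kronecker_mul, hidem, one_mul]
  · -- sum
    have : (∑ a, ((P a) ⊗ₖ (1 : Matrix I I ℂ)).submatrix ⇑e ⇑e)
        = ((∑ a, P a) ⊗ₖ (1 : Matrix I I ℂ)).submatrix ⇑e ⇑e := by
      ext p q
      simp [Matrix.sum_apply, Matrix.submatrix_apply, Matrix.kroneckerMap_apply,
        Finset.sum_mul]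
    rw [this, hsum, Matrix.one_kronecker_one, Matrix.submatrix_one_equiv]
  · -- edges
    intro X hX a
    simp only [tensorSpan] at hX
    refine Submodule.span_induction ?_ ?_ ?_ ?_ hX
    · rintro x ⟨u, hu, v, hv, rfl⟩
      have key : (u ⊗ₖ v) ⊗ₖ (1 : Matrix (Fin k) (Fin k) ℂ)
          = ((v ⊗ₖ (1 : Matrix (Fin k) (Fin k) ℂ)) ⊗ₖ u).submatrix ⇑e ⇑e := by
        ext ⟨⟨i, j⟩, s⟩ ⟨⟨i', j'⟩, s'⟩
        simp [he, auxEquivR, Matrix.submatrix_apply, Matrix.kroneckerMap_apply,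
          Matrix.one_apply]
        ring
      rw [key, Matrix.submatrix_mul_equiv, Matrix.submatrix_mul_equiv,
        ← Matrix.mul_kronecker_mul, ← Matrix.mul_kronecker_mul,
        hedge v hv a, Matrix.zero_kronecker]
      ext p q; simp
    · simp
    · intro x y hx hy ihx ihy
      rw [Matrix.add_kronecker, Matrix.mul_add, Matrix.add_mul, ihx, ihy, add_zero]
    · intro r x hx ihx
      rw [Matrix.smul_kronecker, Matrix.mul_smul, Matrix.smul_mul, ihx, smul_zero]

theorem hedetniemi_categorical {n m : ℕ}
    (SG : Submodule ℂ (Matrix (Fin n) (Fin n) ℂ))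
    (MG : StarSubalgebra ℂ (Matrix (Fin n) (Fin n) ℂ))
    (SH : Submodule ℂ (Matrix (Fin m) (Fin m) ℂ))
    (MH : StarSubalgebra ℂ (Matrix (Fin m) (Fin m) ℂ))
    (hG : IsQuantumGraph SG (MG : Set (Matrix (Fin n) (Fin n) ℂ)))
    (hH : IsQuantumGraph SH (MH : Set (Matrix (Fin m) (Fin m) ℂ))) :
    qChrom (tensorSpan (SG : Set (Matrix (Fin n) (Fin n) ℂ)) (SH : Set (Matrix (Fin m) (Fin m) ℂ))) ((tensorSpan (MG : Set (Matrix (Fin n) (Fin n) ℂ)) (MH : Set (Matrix (Fin m) (Fin m) ℂ)) : Submodule ℂ (Matrix (Fin n × Fin m) (Fin n × Fin m) ℂ)) : Set (Matrix (Fin n × Fin m) (Fin n × Fin m) ℂ))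
      ≤ min (qChrom SG (MG : Set (Matrix (Fin n) (Fin n) ℂ))) (qChrom SH (MH : Set (Matrix (Fin m) (Fin m) ℂ)))
    ∧ (∀ c : ℕ, (HasQColoring SG (MG : Set (Matrix (Fin n) (Fin n) ℂ)) c ∨ HasQColoring SH (MH : Set (Matrix (Fin m) (Fin m) ℂ)) c) →
        HasQColoring (tensorSpan (SG : Set (Matrix (Fin n) (Fin n) ℂ)) (SH : Set (Matrix (Fin m) (Fin m) ℂ))) ((tensorSpan (MG : Set (Matrix (Fin n) (Fin n) ℂ)) (MH : Set (Matrix (Fin m) (Fin m) ℂ)) : Submodule ℂ (Matrix (Fin n × Fin m) (Fin n × Fin m) ℂ)) : Set (Matrix (Fin n × Fin m) (Fin n × Fin m) ℂ)) c) := by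
  have key : ∀ c : ℕ, (HasQColoring SG (MG : Set (Matrix (Fin n) (Fin n) ℂ)) c ∨
      HasQColoring SH (MH : Set (Matrix (Fin m) (Fin m) ℂ)) c) →
      HasQColoring (tensorSpan (SG : Set (Matrix (Fin n) (Fin n) ℂ)) (SH : Set (Matrix (Fin m) (Fin m) ℂ)))
        ((tensorSpan (MG : Set (Matrix (Fin n) (Fin n) ℂ)) (MH : Set (Matrix (Fin m) (Fin m) ℂ)) :
          Submodule ℂ (Matrix (Fin n × Fin m) (Fin n × Fin m) ℂ)) :
          Set (Matrix (Fin n × Fin m) (Fin n × Fin m) ℂ)) c := by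
    rintro c (⟨k, hk, P, hP⟩ | ⟨k, hk, P, hP⟩)
    · have h1 : (1 : Matrix (Fin m) (Fin m) ℂ) ∈ (MH : Set (Matrix (Fin m) (Fin m) ℂ)) :=
        one_mem MH
      have hcol := transfer_left SG (MG : Set (Matrix (Fin n) (Fin n) ℂ))
        (SH : Set (Matrix (Fin m) (Fin m) ℂ)) (MH : Set (Matrix (Fin m) (Fin m) ℂ)) h1 P hP
      exact ⟨k, hk, _, hcol⟩
    · have h1 : (1 : Matrix (Fin n) (Fin n) ℂ) ∈ (MG : Set (Matrix (Fin n) (Fin n) ℂ)) :=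
        one_mem MG
      have hcol := transfer_right (SG : Set (Matrix (Fin n) (Fin n) ℂ))
        (MG : Set (Matrix (Fin n) (Fin n) ℂ)) SH (MH : Set (Matrix (Fin m) (Fin m) ℂ)) h1 P hP
      exact ⟨k, hk, _, hcol⟩
  refine ⟨le_min ?_ ?_, key⟩
  · simp only [qChrom]
    refine le_iInf fun c => le_iInf fun hc => ?_
    exact iInf₂_le c (key c (Or.inl hc))
  · simp only [qChrom]
    refine le_iInf fun c => le_iInf fun hc => ?_
    exact iInf₂_le c (key c (Or.inr hc))


end
end
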